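/- arXiv:1312.4227 — 5 statements merged into one kernel-verified Lean document; each statement's English description precedes it below -/
import Mathlib

section
/- Let φ₁ and φ₂ be continuous probability densities on ℝ, positive exactly on open intervals I₁ and I₂, with CDFs F₁ and F₂, and set K := F₂⁻¹ ∘ F₁ on I₁. Then K is differentiable at every x ∈ I₁ with K'(x) = φ₁(x)/φ₂(K(x)); that is, K is a solution of the initial value problem K'(x) = φ₁(x)/φ₂(K(x)) with K(x) → inf I₂ as x → inf I₁. -/
open MeasureTheory Set Filter

/-- The cumulative distribution function of a density `φ` (w.r.t. Lebesgue measure). -/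
noncomputable def cdfOf (φ : ℝ → ℝ) (x : ℝ) : ℝ := ∫ t in Set.Iic x, φ t

section Helpers

variable {φ : ℝ → ℝ} {I : Set ℝ}

lemma cdfOf_hasDerivAt (hc : Continuous φ) (hi : Integrable φ) (x : ℝ) :
    HasDerivAt (cdfOf φ) (φ x) x := by
  have key : ∀ u, cdfOf φ u = cdfOf φ (x - 1) + ∫ t in (x - 1)..u, φ t := by
    intro u
    have := intervalIntegral.integral_Iic_sub_Iic (hi.integrableOn (s := Set.Iic (x - 1)))
      (hi.integrableOn (s := Set.Iic u))
    unfold cdfOf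
    linarith [this]
  have h2 : HasDerivAt (fun u => cdfOf φ (x - 1) + ∫ t in (x - 1)..u, φ t) (φ x) x := by
    have h := intervalIntegral.integral_hasDerivAt_right (a := x - 1) (b := x)
      (hc.intervalIntegrable _ _)
      hc.stronglyMeasurable.stronglyMeasurableAtFilter
      hc.continuousAt
    simpa using h
  exact h2.congr_of_eventuallyEq (Filter.Eventually.of_forall key)

lemma cdfOf_nonneg (hnn : ∀ x, 0 ≤ φ x) (x : ℝ) : 0 ≤ cdfOf φ x :=
  setIntegral_nonneg measurableSet_Iic fun t _ => hnn t

lemma cdfOf_mono (hnn : ∀ x, 0 ≤ φ x) (hi : Integrable φ) : Monotone (cdfOf φ) := by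
  intro a b hab
  exact setIntegral_mono_set hi.integrableOn (Filter.Eventually.of_forall fun t => hnn t)
    ((Set.Iic_subset_Iic.2 hab).eventuallyLE)

lemma cdfOf_lt (hc : Continuous φ) (hi : Integrable φ)
    (hpos : ∀ x, 0 < φ x ↔ x ∈ I) {a b : ℝ} (hab : a < b) (hsub : Set.Ioo a b ⊆ I) :
    cdfOf φ a < cdfOf φ b := by
  have h1 : 0 < ∫ t in a..b, φ t :=
    intervalIntegral.intervalIntegral_pos_of_pos_on (hc.intervalIntegrable a b)
      (fun x hx => (hpos x).2 (hsub hx)) hab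
  have h2 := intervalIntegral.integral_Iic_sub_Iic (hi.integrableOn (s := Set.Iic a))
    (hi.integrableOn (s := Set.Iic b))
  unfold cdfOf
  linarith [h2]

lemma cdfOf_pos (hc : Continuous φ) (hi : Integrable φ) (hnn : ∀ x, 0 ≤ φ x)
    (hpos : ∀ x, 0 < φ x ↔ x ∈ I) (hIo : IsOpen I) {y : ℝ} (hy : y ∈ I) :
    0 < cdfOf φ y := by
  obtain ⟨δ, hδ, hball⟩ := Metric.isOpen_iff.1 hIo y hy
  have hsub : Set.Ioo (y - δ) y ⊆ I := by
    intro t ht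
    obtain ⟨ht1, ht2⟩ := ht
    apply hball
    rw [Metric.mem_ball, Real.dist_eq, abs_lt]
    constructor <;> linarith
  exact lt_of_le_of_lt (cdfOf_nonneg hnn (y - δ))
    (cdfOf_lt hc hi hpos (by linarith) hsub)

lemma I_nonempty (hnn : ∀ x, 0 ≤ φ x) (hpos : ∀ x, 0 < φ x ↔ x ∈ I)
    (h1 : ∫ x, φ x = 1) : I.Nonempty := by
  by_contra h
  rw [Set.not_nonempty_iff_eq_empty] at h
  have hz : ∀ x, φ x = 0 := by
    intro x
    rcases eq_or_lt_of_le (hnn x) with he | hl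
    · exact he.symm
    · exact absurd ((hpos x).1 hl) (by simp [h])
  rw [funext hz] at h1
  simp at h1

lemma cdfOf_tendsto_atBot (hnn : ∀ x, 0 ≤ φ x) (hi : Integrable φ) :
    Tendsto (cdfOf φ) atBot (nhds 0) := by
  have hN : Tendsto (fun n : ℕ => cdfOf φ (-(n : ℝ))) atTop (nhds 0) := by
    have h := tendsto_setIntegral_of_antitone (μ := volume) (f := φ)
      (s := fun n : ℕ => Set.Iic (-(n : ℝ)))
      (fun _ => measurableSet_Iic)
      (fun n m hnm => Set.Iic_subset_Iic.2 (neg_le_neg (by exact_mod_cast hnm)))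
      ⟨0, hi.integrableOn⟩
    have hempty : ⋂ n : ℕ, Set.Iic (-(n : ℝ)) = ∅ := by
      ext x
      simp only [Set.mem_iInter, Set.mem_Iic, Set.mem_empty_iff_false, iff_false]
      push_neg
      obtain ⟨n, hn⟩ := exists_nat_gt (-x)
      exact ⟨n, by linarith⟩
    rwa [hempty, Measure.restrict_empty, integral_zero_measure] at h
  refine tendsto_order.2 ⟨fun c hc => Eventually.of_forall fun x =>
    lt_of_lt_of_le hc (cdfOf_nonneg hnn x), fun ε hε => ?_⟩
  obtain ⟨n, hn⟩ := (hN.eventually_lt_const hε).exists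
  filter_upwards [eventually_le_atBot (-(n : ℝ))] with x hx
  exact lt_of_le_of_lt (cdfOf_mono hnn hi hx) hn

end Helpers

/-- with continuous probability densities `φ₁`, `φ₂` positive exactly on open
intervals `I₁`, `I₂`, the binding map `K = F₂⁻¹ ∘ F₁` (characterized by `K x ∈ I₂` and
`F₂ (K x) = F₁ x` on `I₁`) is differentiable on `I₁` with `K' x = φ₁ x / φ₂ (K x)`, and it
satisfies the boundary condition `K x → inf I₂` as `x → inf I₁` (infima taken in `EReal`
to accommodate unbounded intervals). -/
theorem stmt1
    (φ₁ φ₂ : ℝ → ℝ) (I₁ I₂ : Set ℝ)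
    (hφ₁c : Continuous φ₁) (hφ₂c : Continuous φ₂)
    (hφ₁nn : ∀ x, 0 ≤ φ₁ x) (hφ₂nn : ∀ x, 0 ≤ φ₂ x)
    (hφ₁i : Integrable φ₁) (hφ₂i : Integrable φ₂)
    (hφ₁1 : ∫ x, φ₁ x = 1) (hφ₂1 : ∫ x, φ₂ x = 1)
    (hI₁o : IsOpen I₁) (hI₁conn : I₁.OrdConnected)
    (hI₂o : IsOpen I₂) (hI₂conn : I₂.OrdConnected)
    (hpos₁ : ∀ x, 0 < φ₁ x ↔ x ∈ I₁)
    (hpos₂ : ∀ x, 0 < φ₂ x ↔ x ∈ I₂)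
    (K : ℝ → ℝ)
    (hK : ∀ x ∈ I₁, K x ∈ I₂ ∧ cdfOf φ₂ (K x) = cdfOf φ₁ x) :
    (∀ x ∈ I₁, HasDerivAt K (φ₁ x / φ₂ (K x)) x) ∧
      Tendsto (fun x : ℝ => (K x : EReal))
        ((Filter.comap (fun x : ℝ => (x : EReal))
            (nhds (sInf ((fun x : ℝ => (x : EReal)) '' I₁)))) ⊓ Filter.principal I₁)
        (nhds (sInf ((fun x : ℝ => (x : EReal)) '' I₂))) := by
  have hF₁d : ∀ x, HasDerivAt (cdfOf φ₁) (φ₁ x) x := cdfOf_hasDerivAt hφ₁c hφ₁i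
  have hF₂d : ∀ x, HasDerivAt (cdfOf φ₂) (φ₂ x) x := cdfOf_hasDerivAt hφ₂c hφ₂i
  have hstrict₁ : ∀ a b : ℝ, a ∈ I₁ → b ∈ I₁ → a < b → cdfOf φ₁ a < cdfOf φ₁ b := by
    intro a b ha hb hab
    exact cdfOf_lt hφ₁c hφ₁i hpos₁ hab
      (fun t ht => hI₁conn.out ha hb (Set.Ioo_subset_Icc_self ht))
  have hstrict₂ : ∀ a b : ℝ, a ∈ I₂ → b ∈ I₂ → a < b → cdfOf φ₂ a < cdfOf φ₂ b := by
    intro a b ha hb hab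
    exact cdfOf_lt hφ₂c hφ₂i hpos₂ hab
      (fun t ht => hI₂conn.out ha hb (Set.Ioo_subset_Icc_self ht))
  constructor
  · -- derivative part
    intro x₀ hx₀
    obtain ⟨hKmem, hKeq⟩ := hK x₀ hx₀
    set y₀ := K x₀ with hy₀
    have hφ₂pos : 0 < φ₂ y₀ := (hpos₂ _).2 hKmem
    obtain ⟨ε₂, hε₂, hball₂⟩ := Metric.isOpen_iff.1 hI₂o y₀ hKmem
    -- continuity of K at x₀
    have hKcont : Tendsto K (nhds x₀) (nhds y₀) := by
      rw [Metric.tendsto_nhds]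
      intro ε hε
      set ε' := min (ε / 2) (ε₂ / 2) with hε'def
      have hε'pos : 0 < ε' := lt_min (by linarith) (by linarith)
      have hε'le : ε' ≤ ε₂ / 2 := min_le_right _ _
      have humem : y₀ - ε' ∈ I₂ := by
        apply hball₂; rw [Metric.mem_ball, Real.dist_eq, abs_lt]; constructor <;> linarith
      have hvmem : y₀ + ε' ∈ I₂ := by
        apply hball₂; rw [Metric.mem_ball, Real.dist_eq, abs_lt]; constructor <;> linarith
      have hu : cdfOf φ₂ (y₀ - ε') < cdfOf φ₂ y₀ := hstrict₂ _ _ humem hKmem (by linarith)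
      have hv : cdfOf φ₂ y₀ < cdfOf φ₂ (y₀ + ε') := hstrict₂ _ _ hKmem hvmem (by linarith)
      have hev : ∀ᶠ x in nhds x₀,
          cdfOf φ₁ x ∈ Set.Ioo (cdfOf φ₂ (y₀ - ε')) (cdfOf φ₂ (y₀ + ε')) :=
        (hF₁d x₀).continuousAt.eventually_mem (Ioo_mem_nhds (hKeq ▸ hu) (hKeq ▸ hv))
      filter_upwards [hev, hI₁o.mem_nhds hx₀] with x hx hxI
      obtain ⟨hxm, hxe⟩ := hK x hxI
      rw [← hxe] at hx
      have h1 : y₀ - ε' < K x := by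
        by_contra h
        push_neg at h
        exact absurd hx.1 (not_lt.2 (cdfOf_mono hφ₂nn hφ₂i h))
      have h2 : K x < y₀ + ε' := by
        by_contra h
        push_neg at h
        exact absurd hx.2 (not_lt.2 (cdfOf_mono hφ₂nn hφ₂i h))
      rw [Real.dist_eq, abs_lt]
      have : ε' ≤ ε / 2 := min_le_left _ _
      constructor <;> linarith
    -- eventual facts
    have hne : ∀ᶠ x in nhdsWithin x₀ {x₀}ᶜ, K x ≠ y₀ ∧ x ∈ I₁ := by
      have hevI : ∀ᶠ x in nhdsWithin x₀ {x₀}ᶜ, x ∈ I₁ :=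
        eventually_nhdsWithin_of_eventually_nhds (hI₁o.mem_nhds hx₀)
      filter_upwards [hevI, eventually_mem_nhdsWithin] with x hxI hxne
      refine ⟨?_, hxI⟩
      intro hKy
      obtain ⟨hxm, hxe⟩ := hK x hxI
      have heq : cdfOf φ₁ x = cdfOf φ₁ x₀ := by rw [← hxe, hKy, hKeq]
      rcases lt_or_gt_of_ne (show x ≠ x₀ from hxne) with h | h
      · exact absurd heq (ne_of_lt (hstrict₁ _ _ hxI hx₀ h))
      · exact absurd heq.symm (ne_of_lt (hstrict₁ _ _ hx₀ hxI h))
    have hslope₁ : Tendsto (slope (cdfOf φ₁) x₀) (nhdsWithin x₀ {x₀}ᶜ) (nhds (φ₁ x₀)) :=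
      hasDerivAt_iff_tendsto_slope.1 (hF₁d x₀)
    have hKtends : Tendsto K (nhdsWithin x₀ {x₀}ᶜ) (nhdsWithin y₀ {y₀}ᶜ) := by
      rw [tendsto_nhdsWithin_iff]
      exact ⟨hKcont.mono_left nhdsWithin_le_nhds, hne.mono fun x hx => hx.1⟩
    have hslope₂ : Tendsto (fun x => slope (cdfOf φ₂) y₀ (K x)) (nhdsWithin x₀ {x₀}ᶜ)
        (nhds (φ₂ y₀)) :=
      (hasDerivAt_iff_tendsto_slope.1 (hF₂d y₀)).comp hKtends
    rw [hasDerivAt_iff_tendsto_slope]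
    refine Filter.Tendsto.congr' ?_ (hslope₁.div hslope₂ hφ₂pos.ne')
    filter_upwards [hne, eventually_mem_nhdsWithin] with x hx hxne
    obtain ⟨hKne, hxI⟩ := hx
    obtain ⟨hxm, hxe⟩ := hK x hxI
    have hxx₀ : x - x₀ ≠ 0 := sub_ne_zero.2 hxne
    have hky : K x - y₀ ≠ 0 := sub_ne_zero.2 hKne
    have hA : cdfOf φ₂ (K x) - cdfOf φ₂ y₀ ≠ 0 := by
      rcases lt_or_gt_of_ne hKne with h | h
      · exact ne_of_lt (by linarith [hstrict₂ _ _ hxm hKmem h])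
      · exact ne_of_gt (by linarith [hstrict₂ _ _ hKmem hxm h])
    simp only [Pi.div_apply, slope_def_field]
    rw [← hy₀, ← hxe, ← hKeq]
    field_simp
  · -- boundary part
    set S₁ := (fun x : ℝ => (x : EReal)) '' I₁ with hS₁
    set S₂ := (fun x : ℝ => (x : EReal)) '' I₂ with hS₂
    have hI₁ne : I₁.Nonempty := I_nonempty hφ₁nn hpos₁ hφ₁1
    obtain ⟨x₁, hx₁⟩ := hI₁ne
    set L := (Filter.comap (fun x : ℝ => (x : EReal)) (nhds (sInf S₁))) ⊓ Filter.principal I₁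
      with hL
    have hF₁0 : Tendsto (cdfOf φ₁) L (nhds 0) := by
      by_cases hbot : sInf S₁ = ⊥
      · have hle : Filter.comap (fun x : ℝ => (x : EReal)) (nhds (⊥ : EReal)) ≤ atBot := by
          refine (atBot_basis.ge_iff).2 fun r _ => ?_
          refine Filter.mem_comap.2 ⟨Set.Iio ((r : ℝ) : EReal),
            IsOpen.mem_nhds isOpen_Iio (EReal.bot_lt_coe r), fun x hx => ?_⟩
          have : (x : EReal) < (r : EReal) := hx
          exact le_of_lt (by exact_mod_cast this)
        exact (cdfOf_tendsto_atBot hφ₁nn hφ₁i).mono_left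
          (le_trans inf_le_left (by rw [hbot]; exact hle))
      · have hlt : sInf S₁ < ⊤ :=
          lt_of_le_of_lt (sInf_le ⟨x₁, hx₁, rfl⟩) (EReal.coe_lt_top x₁)
        obtain ⟨a, ha⟩ : ∃ a : ℝ, sInf S₁ = (a : EReal) :=
          ⟨(sInf S₁).toReal, (EReal.coe_toReal hlt.ne hbot).symm⟩
        have haleb : ∀ t ∈ I₁, a ≤ t := by
          intro t ht
          have : sInf S₁ ≤ (t : EReal) := sInf_le ⟨t, ht, rfl⟩
          rw [ha] at this
          exact_mod_cast this
        have hanotin : a ∉ I₁ := by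
          intro haI
          obtain ⟨δ, hδ, hball⟩ := Metric.isOpen_iff.1 hI₁o a haI
          have : a - δ / 2 ∈ I₁ := by
            apply hball; rw [Metric.mem_ball, Real.dist_eq, abs_lt]; constructor <;> linarith
          linarith [haleb _ this]
        have hzero : ∀ t ∈ Set.Iic a, φ₁ t = 0 := by
          intro t ht
          rcases eq_or_lt_of_le (hφ₁nn t) with he | hl
          · exact he.symm
          · have htI : t ∈ I₁ := (hpos₁ t).1 hl
            have := haleb t htI
            have : t = a := le_antisymm ht this
            exact absurd (this ▸ htI) hanotin
        have hFa : cdfOf φ₁ a = 0 := by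
          unfold cdfOf
          rw [setIntegral_congr_fun measurableSet_Iic hzero]
          simp
        have hcomap : Filter.comap (fun x : ℝ => (x : EReal)) (nhds ((a : ℝ) : EReal))
            = nhds a := by
          rw [EReal.nhds_coe, Filter.comap_map EReal.coe_injective]
        have hLle : L ≤ nhds a := le_trans inf_le_left (by rw [ha, hcomap])
        exact hFa ▸ ((hF₁d a).continuousAt.tendsto.mono_left hLle)
    refine tendsto_order.2 ⟨fun c hc => ?_, fun b hb => ?_⟩
    · refine Filter.eventually_inf_principal.2 (Eventually.of_forall fun x hxI => ?_)
      exact lt_of_lt_of_le hc (sInf_le ⟨K x, (hK x hxI).1, rfl⟩)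
    · obtain ⟨y, hyI, hylt⟩ : ∃ y ∈ I₂, (y : EReal) < b := by
        by_contra h
        push_neg at h
        exact absurd (le_sInf fun z hz => by
          obtain ⟨y, hyI, rfl⟩ := hz; exact h y hyI) (not_le.2 hb)
      have hFy : 0 < cdfOf φ₂ y := cdfOf_pos hφ₂c hφ₂i hφ₂nn hpos₂ hI₂o hyI
      have hev : ∀ᶠ x in L, cdfOf φ₁ x < cdfOf φ₂ y := hF₁0.eventually_lt_const hFy
      have hevI : ∀ᶠ x in L, x ∈ I₁ :=
        Filter.eventually_inf_principal.2 (Eventually.of_forall fun _ h => h)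
      filter_upwards [hev, hevI] with x h1 h2
      obtain ⟨hm2, he2⟩ := hK x h2
      have hKlty : K x < y := by
        by_contra h
        push_neg at h
        have := cdfOf_mono hφ₂nn hφ₂i h
        rw [he2] at this
        linarith
      exact lt_trans (by exact_mod_cast hKlty) hylt
end

section
/- Under the benchmark setup, assume additionally that I₁ is a bounded interval and that q is uniformly continuous. For each n ∈ ℕ let x₀⁽ⁿ⁾ < x₁⁽ⁿ⁾ < … < xₙ⁽ⁿ⁾ be the partition of the closure of I₁ determined by ∫_{x_k⁽ⁿ⁾}^{x_{k+1}⁽ⁿ⁾} φ₁(t) dt = 1/n for k = 0,…,n−1, and set y_k⁽ⁿ⁾ := K(x_k⁽ⁿ⁾). Then the values of the approximating finite portfolios converge to the portfolio value: lim_{n→∞} Σ_{k=0}^{n−1} ((x_{k+1}⁽ⁿ⁾ + x_k⁽ⁿ⁾)/2) · ∫_{y_k⁽ⁿ⁾}^{y_{k+1}⁽ⁿ⁾} q(y) dy = ∫_{I₁} x · (φ₁(x)/φ₂(K(x))) · q(K(x)) dx. -/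
open MeasureTheory Set Filter
set_option maxHeartbeats 1000000

lemma cdfOf_sub_cdfOf {φ : ℝ → ℝ} (hi : Integrable φ) (a b : ℝ) :
    cdfOf φ b - cdfOf φ a = ∫ t in a..b, φ t :=
  intervalIntegral.integral_Iic_sub_Iic hi.integrableOn hi.integrableOn

lemma hasDerivAt_cdfOf {φ : ℝ → ℝ} (hc : Continuous φ) (hi : Integrable φ) (z : ℝ) :
    HasDerivAt (cdfOf φ) (φ z) z := by
  have h : HasDerivAt (fun y => (∫ t in (0:ℝ)..y, φ t) + cdfOf φ 0) (φ z) z := by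
    have := intervalIntegral.integral_hasDerivAt_right (f := φ) (a := 0) (b := z)
      hi.intervalIntegrable (hc.stronglyMeasurableAtFilter _ _) hc.continuousAt
    simpa using this.add_const (cdfOf φ 0)
  refine h.congr_of_eventuallyEq (Eventually.of_forall fun y => ?_)
  have := cdfOf_sub_cdfOf hi 0 y; simp only []; linarith [this]


lemma exists_local_inverse {f : ℝ → ℝ} {c δ : ℝ} (hδ : 0 < δ)
    (hfc : ContinuousOn f (Icc (c-δ) (c+δ)))
    (hm : StrictMonoOn f (Icc (c-δ) (c+δ))) :
    ∃ g : ℝ → ℝ, ContinuousAt g (f c) ∧ g (f c) = c ∧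
      (∀ᶠ y in nhds (f c), f (g y) = y) ∧ (∀ᶠ t in nhds c, g (f t) = t) := by
  have hab : c - δ ≤ c + δ := by linarith
  have hcmem : c ∈ Icc (c-δ) (c+δ) := ⟨by linarith, by linarith⟩
  have hamem : c - δ ∈ Icc (c-δ) (c+δ) := ⟨le_rfl, hab⟩
  have hbmem : c + δ ∈ Icc (c-δ) (c+δ) := ⟨hab, le_rfl⟩
  have hsurj : Icc (f (c-δ)) (f (c+δ)) ⊆ f '' Icc (c-δ) (c+δ) :=
    intermediate_value_Icc hab hfc
  classical
  set g : ℝ → ℝ := fun y =>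
    if h : ∃ t ∈ Icc (c-δ) (c+δ), f t = y then h.choose else c with hg
  have hgmem : ∀ y, g y ∈ Icc (c-δ) (c+δ) := by
    intro y; rw [hg]; dsimp only
    split_ifs with h
    · exact h.choose_spec.1
    · exact hcmem
  have hfg : ∀ y ∈ Icc (f (c-δ)) (f (c+δ)), f (g y) = y := by
    intro y hy
    obtain ⟨t, ht, hft⟩ := hsurj hy
    have h : ∃ t ∈ Icc (c-δ) (c+δ), f t = y := ⟨t, ht, hft⟩
    rw [hg]; dsimp only; rw [dif_pos h]; exact h.choose_spec.2
  have hmapsTo : ∀ t ∈ Icc (c-δ) (c+δ), f t ∈ Icc (f (c-δ)) (f (c+δ)) := by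
    intro t ht
    exact ⟨hm.monotoneOn hamem ht ht.1, hm.monotoneOn ht hbmem ht.2⟩
  have hgf : ∀ t ∈ Icc (c-δ) (c+δ), g (f t) = t := by
    intro t ht
    exact hm.injOn (hgmem (f t)) ht (hfg (f t) (hmapsTo t ht))
  have hnhd : Icc (f (c-δ)) (f (c+δ)) ∈ nhds (f c) :=
    Icc_mem_nhds (hm hamem hcmem (by linarith)) (hm hcmem hbmem (by linarith))
  have hnhd2 : Icc (c-δ) (c+δ) ∈ nhds c := Icc_mem_nhds (by linarith) (by linarith)
  have hgsm : StrictMonoOn g (Icc (f (c-δ)) (f (c+δ))) := by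
    intro y hy y' hy' hlt
    have := hm.lt_iff_lt (hgmem y) (hgmem y')
    rw [hfg y hy, hfg y' hy'] at this
    exact this.mp hlt
  have himg : g '' Icc (f (c-δ)) (f (c+δ)) ∈ nhds (g (f c)) := by
    rw [hgf c hcmem]
    refine Filter.mem_of_superset hnhd2 fun t ht => ⟨f t, hmapsTo t ht, hgf t ht⟩
  have hgc : ContinuousAt g (f c) :=
    hgsm.continuousAt_of_image_mem_nhds hnhd himg
  exact ⟨g, hgc, hgf c hcmem,
    Filter.eventually_iff_exists_mem.2 ⟨_, hnhd, hfg⟩,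
    Filter.eventually_iff_exists_mem.2 ⟨_, hnhd2, hgf⟩⟩

/-- convergence of the values of the approximating finite portfolios.
`I₁` is bounded, `q` is uniformly continuous, and for each `n ≥ 1` the points
`x n 0 < x n 1 < ⋯ < x n n` form the partition of the closure of `I₁` characterized by
`∫_{x n k}^{x n (k+1)} φ₁ = 1/n`.  With `y n k := K (x n k)`, the finite portfolio values
`Σ_k ((x n (k+1) + x n k)/2) ∫_{y n k}^{y n (k+1)} q` converge to the portfolio value
`∫_{I₁} x (φ₁ x / φ₂ (K x)) q (K x) dx`. -/
theorem stmt3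
    (φ₁ φ₂ q : ℝ → ℝ) (I₁ I₂ : Set ℝ)
    (hφ₁c : Continuous φ₁) (hφ₂c : Continuous φ₂)
    (hφ₁nn : ∀ x, 0 ≤ φ₁ x) (hφ₂nn : ∀ x, 0 ≤ φ₂ x)
    (hφ₁i : Integrable φ₁) (hφ₂i : Integrable φ₂)
    (hφ₁1 : ∫ x, φ₁ x = 1) (hφ₂1 : ∫ x, φ₂ x = 1)
    (hI₁o : IsOpen I₁) (hI₁conn : I₁.OrdConnected)
    (hI₂o : IsOpen I₂) (hI₂conn : I₂.OrdConnected)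
    (hpos₁ : ∀ x, 0 < φ₁ x ↔ x ∈ I₁)
    (hpos₂ : ∀ x, 0 < φ₂ x ↔ x ∈ I₂)
    (hI₁bdd : Bornology.IsBounded I₁)
    (hqnn : ∀ y, 0 ≤ q y) (hqi : Integrable q) (hquc : UniformContinuous q)
    (K : ℝ → ℝ)
    (hK : ∀ z ∈ I₁, K z ∈ I₂ ∧ cdfOf φ₂ (K z) = cdfOf φ₁ z)
    (hKc : ContinuousOn K (closure I₁))
    (hVint : IntegrableOn (fun z => z * (φ₁ z / φ₂ (K z)) * q (K z)) I₁)
    (x : ℕ → ℕ → ℝ)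
    (hxmem : ∀ n, 1 ≤ n → ∀ k ≤ n, x n k ∈ closure I₁)
    (hxmono : ∀ n, 1 ≤ n → ∀ j ≤ n, ∀ k ≤ n, j < k → x n j < x n k)
    (hxpart : ∀ n, 1 ≤ n → ∀ k < n, ∫ t in Set.Ioo (x n k) (x n (k+1)), φ₁ t = 1 / n) :
    Tendsto
      (fun n : ℕ => ∑ k ∈ Finset.range n,
        ((x n (k+1) + x n k) / 2) * ∫ y in Set.Ioo (K (x n k)) (K (x n (k+1))), q y)
      atTop
      (nhds (∫ z in I₁, z * (φ₁ z / φ₂ (K z)) * q (K z))) := by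
  -- the interval
  have hzero₁ : ∀ t, t ∉ I₁ → φ₁ t = 0 := fun t ht =>
    le_antisymm (by by_contra h; exact ht ((hpos₁ t).1 (lt_of_not_ge h))) (hφ₁nn t)
  have hne : I₁.Nonempty := by
    by_contra h
    rw [not_nonempty_iff_eq_empty] at h
    have : ∀ t, φ₁ t = 0 := fun t => hzero₁ t (by simp [h])
    rw [show φ₁ = (fun _ => (0:ℝ)) from funext this] at hφ₁1
    simp at hφ₁1
  set A := sInf I₁ with hA
  set B := sSup I₁ with hB
  obtain ⟨hbb, hba⟩ : BddBelow I₁ ∧ BddAbove I₁ :=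
    ⟨hI₁bdd.bddBelow, hI₁bdd.bddAbove⟩
  have hI : I₁ = Ioo A B := by
    apply Subset.antisymm
    · intro t ht
      obtain ⟨ε, hε, hball⟩ := Metric.isOpen_iff.1 hI₁o t ht
      constructor
      · have : t - ε/2 ∈ I₁ := hball (by
          rw [Metric.mem_ball, Real.dist_eq, abs_of_neg (by linarith : t - ε/2 - t < 0)]; linarith)
        calc A ≤ t - ε/2 := csInf_le hbb this
          _ < t := by linarith
      · have : t + ε/2 ∈ I₁ := hball (by
          rw [Metric.mem_ball, Real.dist_eq, abs_of_pos (by linarith : (0:ℝ) < t + ε/2 - t)]; linarith)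
        calc t < t + ε/2 := by linarith
          _ ≤ B := le_csSup hba this
    · intro t ht
      obtain ⟨a, ha, hat⟩ := exists_lt_of_csInf_lt hne ht.1
      obtain ⟨b, hb, htb⟩ := exists_lt_of_lt_csSup hne ht.2
      exact hI₁conn.out ha hb ⟨hat.le, htb.le⟩
  have hAB : A < B := by obtain ⟨t, ht⟩ := hne; rw [hI] at ht; linarith [ht.1, ht.2]
  have hcl : closure I₁ = Icc A B := by rw [hI, closure_Ioo hAB.ne]
  -- CDF facts
  set F₁ := cdfOf φ₁ with hF₁def
  set F₂ := cdfOf φ₂ with hF₂def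
  have hF₁d : ∀ z, HasDerivAt F₁ (φ₁ z) z := hasDerivAt_cdfOf hφ₁c hφ₁i
  have hF₂d : ∀ z, HasDerivAt F₂ (φ₂ z) z := hasDerivAt_cdfOf hφ₂c hφ₂i
  have hF₁cont : Continuous F₁ := by
    apply continuous_iff_continuousAt.2 fun z => (hF₁d z).continuousAt
  have hF₂cont : Continuous F₂ := by
    apply continuous_iff_continuousAt.2 fun z => (hF₂d z).continuousAt
  have hF₁mono : Monotone F₁ := by
    intro u v huv
    have h := cdfOf_sub_cdfOf hφ₁i u v
    have : 0 ≤ ∫ t in u..v, φ₁ t :=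
      intervalIntegral.integral_nonneg huv (fun t _ => hφ₁nn t)
    rw [← hF₁def] at h; linarith
  have hF₂mono : Monotone F₂ := by
    intro u v huv
    have h := cdfOf_sub_cdfOf hφ₂i u v
    have : 0 ≤ ∫ t in u..v, φ₂ t :=
      intervalIntegral.integral_nonneg huv (fun t _ => hφ₂nn t)
    rw [← hF₂def] at h; linarith
  have hF₁strict : StrictMonoOn F₁ (Icc A B) := by
    intro u hu v hv huv
    have h := cdfOf_sub_cdfOf hφ₁i u v
    have hpos : 0 < ∫ t in u..v, φ₁ t := by
      apply intervalIntegral.intervalIntegral_pos_of_pos_on hφ₁i.intervalIntegrable _ huv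
      intro t ht
      exact (hpos₁ t).2 (by rw [hI]; exact ⟨lt_of_le_of_lt hu.1 ht.1, lt_of_lt_of_le ht.2 hv.2⟩)
    rw [← hF₁def] at h; linarith
  have hF₁A : F₁ A = 0 := by
    rw [hF₁def]
    apply MeasureTheory.setIntegral_eq_zero_of_forall_eq_zero
    intro t ht
    exact hzero₁ t (by rw [hI]; exact fun h => absurd h.1 (not_lt.2 ht))
  have hF₁B : F₁ B = 1 := by
    have h2 : ∫ t in Ioi B, φ₁ t = 0 := by
      apply MeasureTheory.setIntegral_eq_zero_of_forall_eq_zero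
      intro t ht
      exact hzero₁ t (by rw [hI]; exact fun h => absurd h.2 (not_lt.2 (le_of_lt ht)))
    have h3 := intervalIntegral.integral_Iic_add_Ioi (b := B)
      hφ₁i.integrableOn hφ₁i.integrableOn
    rw [hF₁def]
    show (∫ t in Iic B, φ₁ t) = 1
    rw [← hφ₁1]
    linarith [h3]
  -- partition facts
  have hxIcc : ∀ n, 1 ≤ n → ∀ k ≤ n, x n k ∈ Icc A B := by
    intro n hn k hk; rw [← hcl]; exact hxmem n hn k hk
  have hstep : ∀ n, 1 ≤ n → ∀ k < n, F₁ (x n (k+1)) - F₁ (x n k) = 1 / n := by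
    intro n hn k hk
    have hle : x n k ≤ x n (k+1) :=
      (hxmono n hn k (le_of_lt hk) (k+1) hk (Nat.lt_succ_self k)).le
    rw [hF₁def, cdfOf_sub_cdfOf hφ₁i, intervalIntegral.integral_of_le hle,
      MeasureTheory.integral_Ioc_eq_integral_Ioo]
    exact hxpart n hn k hk
  have hFk : ∀ n, 1 ≤ n → ∀ k ≤ n, F₁ (x n k) = F₁ (x n 0) + k / n := by
    intro n hn k
    induction k with
    | zero => simp
    | succ m ih =>
      intro hm
      have h1 := ih (le_of_lt hm)
      have h2 := hstep n hn m hm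
      push_cast
      rw [add_div]
      linarith
  have hFn0 : ∀ n, 1 ≤ n → F₁ (x n 0) = 0 := by
    intro n hn
    have h1 := hFk n hn n le_rfl
    have h2 : F₁ (x n n) ≤ 1 := by rw [← hF₁B]; exact hF₁mono (hxIcc n hn n le_rfl).2
    have h3 : 0 ≤ F₁ (x n 0) := by rw [← hF₁A]; exact hF₁mono (hxIcc n hn 0 (Nat.zero_le n)).1
    have h4 : (n:ℝ)/n = 1 := div_self (by positivity)
    rw [h4] at h1
    linarith
  have hFkv : ∀ n, 1 ≤ n → ∀ k ≤ n, F₁ (x n k) = k / n := by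
    intro n hn k hk; rw [hFk n hn k hk, hFn0 n hn, zero_add]
  have hx0 : ∀ n, 1 ≤ n → x n 0 = A := by
    intro n hn
    by_contra h
    have hmem := hxIcc n hn 0 (Nat.zero_le n)
    have : A < x n 0 := lt_of_le_of_ne hmem.1 (Ne.symm h)
    have := hF₁strict (left_mem_Icc.2 hAB.le) hmem this
    rw [hF₁A, hFn0 n hn] at this
    exact lt_irrefl 0 this
  have hxn : ∀ n, 1 ≤ n → x n n = B := by
    intro n hn
    by_contra h
    have hmem := hxIcc n hn n le_rfl
    have hlt : x n n < B := lt_of_le_of_ne hmem.2 h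
    have := hF₁strict hmem (right_mem_Icc.2 hAB.le) hlt
    rw [hF₁B, hFkv n hn n le_rfl, div_self (by positivity : (n:ℝ) ≠ 0)] at this
    exact lt_irrefl 1 this
  -- K facts
  have hKI2 : ∀ z ∈ Ioo A B, K z ∈ I₂ := by intro z hz; exact (hK z (hI ▸ hz)).1
  have hF₂K : ∀ z ∈ Ioo A B, F₂ (K z) = F₁ z := by intro z hz; exact (hK z (hI ▸ hz)).2
  have hKcIcc : ContinuousOn K (Icc A B) := hcl ▸ hKc
  have hKsm : StrictMonoOn K (Ioo A B) := by
    intro u hu v hv huv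
    by_contra h
    have h2 : F₂ (K v) ≤ F₂ (K u) := hF₂mono (not_lt.1 h)
    rw [hF₂K u hu, hF₂K v hv] at h2
    have := hF₁strict (Ioo_subset_Icc_self hu) (Ioo_subset_Icc_self hv) huv
    linarith
  have hKmono : MonotoneOn K (Icc A B) := by
    intro u hu v hv huv
    rcases eq_or_lt_of_le huv with rfl | huv
    · exact le_rfl
    have hsub : Ioo u v ⊆ Ioo A B := Ioo_subset_Ioo hu.1 hv.2
    set m := (u + v)/2 with hm
    have hum : u < m := by rw [hm]; linarith
    have hmv : m < v := by rw [hm]; linarith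
    have hmm : m ∈ Ioo A B := hsub ⟨hum, hmv⟩
    have h1 : K u ≤ K m := by
      have htd : Tendsto K (nhdsWithin u (Ioo u m)) (nhds (K u)) := by
        apply (hKcIcc u hu).mono_left
        apply nhdsWithin_mono
        exact fun t ht => ⟨le_trans hu.1 ht.1.le, le_trans ht.2.le (le_trans hmv.le hv.2)⟩
      have : NeBot (nhdsWithin u (Ioo u m)) := left_nhdsWithin_Ioo_neBot hum
      apply le_of_tendsto htd
      filter_upwards [self_mem_nhdsWithin] with t ht
      exact (hKsm (hsub ⟨ht.1, lt_trans ht.2 hmv⟩) hmm ht.2).le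
    have h2 : K m ≤ K v := by
      have htd : Tendsto K (nhdsWithin v (Ioo m v)) (nhds (K v)) := by
        apply (hKcIcc v hv).mono_left
        apply nhdsWithin_mono
        exact fun t ht => ⟨le_trans hu.1 (le_trans hum.le ht.1.le), le_trans ht.2.le hv.2⟩
      have : NeBot (nhdsWithin v (Ioo m v)) := right_nhdsWithin_Ioo_neBot hmv
      apply ge_of_tendsto htd
      filter_upwards [self_mem_nhdsWithin] with t ht
      exact (hKsm hmm (hsub ⟨lt_trans hum ht.1, ht.2⟩) ht.1).le
    linarith
  -- derivative of K
  have hKd : ∀ z ∈ Ioo A B, HasDerivAt K (φ₁ z / φ₂ (K z)) z := by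
    intro z hz
    have hcI2 : K z ∈ I₂ := hKI2 z hz
    obtain ⟨ε, hε, hball⟩ := Metric.isOpen_iff.1 hI₂o (K z) hcI2
    set δ := ε/2 with hδdef
    have hδ : 0 < δ := by positivity
    have hIccsub : Icc (K z - δ) (K z + δ) ⊆ I₂ := by
      intro t ht
      apply hball
      rw [Metric.mem_ball, Real.dist_eq, abs_lt]
      constructor <;> [linarith [ht.1]; linarith [ht.2]]
    have hsm : StrictMonoOn F₂ (Icc (K z - δ) (K z + δ)) := by
      intro u hu v hv huv
      have h := cdfOf_sub_cdfOf hφ₂i u v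
      have hpos : 0 < ∫ t in u..v, φ₂ t := by
        apply intervalIntegral.intervalIntegral_pos_of_pos_on hφ₂i.intervalIntegrable _ huv
        intro t ht
        exact (hpos₂ t).2 (hIccsub ⟨le_trans hu.1 ht.1.le, le_trans ht.2.le hv.2⟩)
      rw [← hF₂def] at h; linarith
    obtain ⟨g, hgc, hgfc, hfg, hgf⟩ := exists_local_inverse hδ hF₂cont.continuousOn hsm
    have hφ₂pos : 0 < φ₂ (K z) := (hpos₂ (K z)).2 hcI2
    have hgd : HasDerivAt g (φ₂ (K z))⁻¹ (F₂ (K z)) := by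
      refine HasDerivAt.of_local_left_inverse hgc ?_ (ne_of_gt hφ₂pos) hfg
      rw [hgfc]; exact hF₂d (K z)
    have hKca : ContinuousAt K z := by
      apply hKc.continuousAt
      rw [hcl]; exact Icc_mem_nhds hz.1 hz.2
    have hev : (fun t => g (F₁ t)) =ᶠ[nhds z] K := by
      have h1 : ∀ᶠ t in nhds z, g (F₂ (K t)) = K t := hKca.eventually hgf
      have h2 : ∀ᶠ t in nhds z, F₂ (K t) = F₁ t := by
        filter_upwards [hI₁o.mem_nhds (hI ▸ hz)] with t ht
        exact hF₂K t (hI ▸ ht)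
      filter_upwards [h1, h2] with t h1t h2t
      rw [← h2t, h1t]
    have hcomp : HasDerivAt (fun t => g (F₁ t)) ((φ₂ (K z))⁻¹ * φ₁ z) z := by
      have hgz : HasDerivAt g (φ₂ (K z))⁻¹ (F₁ z) := by rw [← hF₂K z hz]; exact hgd
      exact hgz.comp z (hF₁d z)
    have hres := hcomp.congr_of_eventuallyEq hev.symm
    exact hres.congr_deriv (by rw [div_eq_inv_mul])
  -- the function g and its antiderivative H
  set G := cdfOf q with hGdef
  have hGd : ∀ y, HasDerivAt G (q y) y := hasDerivAt_cdfOf hquc.continuous hqi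
  have hGcont : Continuous G := continuous_iff_continuousAt.2 fun y => (hGd y).continuousAt
  set g : ℝ → ℝ := fun t => φ₁ t / φ₂ (K t) * q (K t) with hgdef
  have hgnn : ∀ t, 0 ≤ g t := fun t => mul_nonneg (div_nonneg (hφ₁nn t) (hφ₂nn _)) (hqnn _)
  set H : ℝ → ℝ := fun t => G (K t) with hHdef
  have hHcont : ContinuousOn H (Icc A B) := hGcont.comp_continuousOn hKcIcc
  have hHd : ∀ t ∈ Ioo A B, HasDerivAt H (g t) t := by
    intro t ht
    have hcomp := (hGd (K t)).comp t (hKd t ht)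
    exact hcomp.congr_deriv (by simp only [hgdef]; ring)
  have hgint : IntegrableOn g (Ioc A B) :=
    intervalIntegral.integrableOn_deriv_of_nonneg hHcont hHd (fun t _ => hgnn t)
  have hgintOoo : IntegrableOn g (Ioo A B) :=
    (integrableOn_Ioc_iff_integrableOn_Ioo).1 hgint
  have hFTC : ∀ a b, a ∈ Icc A B → b ∈ Icc A B → a ≤ b →
      ∫ t in a..b, g t = H b - H a := by
    intro a b ha hb hab
    apply intervalIntegral.integral_eq_sub_of_hasDerivAt_of_le hab
      (hHcont.mono (Icc_subset_Icc ha.1 hb.2))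
      (fun t ht => hHd t ⟨lt_of_le_of_lt ha.1 ht.1, lt_of_lt_of_le ht.2 hb.2⟩)
    rw [intervalIntegrable_iff_integrableOn_Ioc_of_le hab]
    exact hgint.mono_set (Ioc_subset_Ioc ha.1 hb.2)
  have hQint : ∀ a b, a ∈ Icc A B → b ∈ Icc A B → a ≤ b →
      ∫ y in Ioo (K a) (K b), q y = H b - H a := by
    intro a b ha hb hab
    have hKab : K a ≤ K b := hKmono ha hb hab
    rw [← MeasureTheory.integral_Ioc_eq_integral_Ioo, ← intervalIntegral.integral_of_le hKab,
      ← cdfOf_sub_cdfOf hqi]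
  -- the error integrand
  classical
  set kk : ℕ → ℝ → ℕ := fun n z => ⌊(n:ℝ) * F₁ z⌋₊ with hkkdef
  set ψ : ℕ → ℝ → ℝ :=
    fun n z => ((x n (kk n z + 1) + x n (kk n z))/2 - z) * g z with hψdef
  set T := ∫ z in I₁, z * (φ₁ z / φ₂ (K z)) * q (K z) with hTdef
  have hmulg : (fun z => z * (φ₁ z / φ₂ (K z)) * q (K z)) = fun z => z * g z :=
    funext fun z => by rw [hgdef]; ring
  have hzg_int : IntegrableOn (fun z => z * g z) (Ioo A B) := by
    rw [← hmulg, ← hI]; exact hVint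
  have hT : T = ∫ z in Ioo A B, z * g z := by rw [hTdef, hI, hmulg]
  have hF₁nn' : ∀ z ∈ Icc A B, 0 ≤ F₁ z := fun z hz => by
    rw [← hF₁A]; exact hF₁mono hz.1
  have hkk_eq : ∀ n, 1 ≤ n → ∀ k < n, ∀ z ∈ Ioo (x n k) (x n (k+1)), kk n z = k := by
    intro n hn k hk z hz
    have hxk := hxIcc n hn k hk.le
    have hxk1 := hxIcc n hn (k+1) hk
    have hzIcc : z ∈ Icc A B := ⟨le_trans hxk.1 hz.1.le, le_trans hz.2.le hxk1.2⟩
    have h1 : (k:ℝ)/n < F₁ z := by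
      rw [← hFkv n hn k hk.le]; exact hF₁strict hxk hzIcc hz.1
    have h2 : F₁ z < ((k:ℝ)+1)/n := by
      rw [show ((k:ℝ)+1) = ((k+1:ℕ):ℝ) by push_cast; ring, ← hFkv n hn (k+1) hk]
      exact hF₁strict hzIcc hxk1 hz.2
    have hnpos : (0:ℝ) < n := by exact_mod_cast hn
    show ⌊(n:ℝ) * F₁ z⌋₊ = k
    rw [Nat.floor_eq_iff (mul_nonneg hnpos.le (hF₁nn' z hzIcc))]
    constructor
    · calc (k:ℝ) = n * ((k:ℝ)/n) := by field_simp
        _ ≤ n * F₁ z := by nlinarith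
    · calc (n:ℝ) * F₁ z < n * (((k:ℝ)+1)/n) := by nlinarith
        _ = (k:ℝ) + 1 := by field_simp
  -- key identity: sum = T + error integral
  have key : ∀ n, 1 ≤ n →
      (∑ k ∈ Finset.range n, ((x n (k+1) + x n k) / 2) *
        ∫ y in Set.Ioo (K (x n k)) (K (x n (k+1))), q y)
      = T + ∫ z in Ioo A B, ψ n z := by
    intro n hn
    have hxk : ∀ k ≤ n, x n k ∈ Icc A B := hxIcc n hn
    have hlt : ∀ k < n, x n k < x n (k+1) :=
      fun k hk => hxmono n hn k hk.le (k+1) hk (Nat.lt_succ_self k)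
    have hgII : ∀ k < n, IntervalIntegrable g volume (x n k) (x n (k+1)) := by
      intro k hk
      rw [intervalIntegrable_iff_integrableOn_Ioc_of_le (hlt k hk).le]
      exact hgint.mono_set (Ioc_subset_Ioc (hxk k hk.le).1 (hxk (k+1) hk).2)
    have hzgII : ∀ k < n, IntervalIntegrable (fun z => z * g z) volume (x n k) (x n (k+1)) := by
      intro k hk
      rw [intervalIntegrable_iff_integrableOn_Ioc_of_le (hlt k hk).le]
      exact (integrableOn_Ioc_iff_integrableOn_Ioo).2
        (hzg_int.mono_set (Ioo_subset_Ioo (hxk k hk.le).1 (hxk (k+1) hk).2))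
    have hmgII : ∀ k < n, IntervalIntegrable
        (fun z => ((x n (k+1) + x n k)/2) * g z) volume (x n k) (x n (k+1)) :=
      fun k hk => (hgII k hk).const_mul _
    have hψeq : ∀ k < n, EqOn (ψ n)
        (fun z => ((x n (k+1) + x n k)/2) * g z - z * g z) (Ioo (x n k) (x n (k+1))) := by
      intro k hk z hz
      show ((x n (kk n z + 1) + x n (kk n z))/2 - z) * g z = _
      rw [hkk_eq n hn k hk z hz]; ring
    have hψII : ∀ k < n, IntervalIntegrable (ψ n) volume (x n k) (x n (k+1)) := by
      intro k hk
      rw [intervalIntegrable_iff_integrableOn_Ioc_of_le (hlt k hk).le,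
        integrableOn_Ioc_iff_integrableOn_Ioo]
      have hbase : IntegrableOn (fun z => ((x n (k+1) + x n k)/2) * g z - z * g z)
          (Ioo (x n k) (x n (k+1))) := by
        apply Integrable.sub
        · exact (hgintOoo.mono_set (Ioo_subset_Ioo (hxk k hk.le).1 (hxk (k+1) hk).2)).const_mul _
        · exact hzg_int.mono_set (Ioo_subset_Ioo (hxk k hk.le).1 (hxk (k+1) hk).2)
      exact hbase.congr_fun (fun z hz => (hψeq k hk hz).symm) measurableSet_Ioo
    have hψint_eq : ∀ k < n, (∫ z in x n k..x n (k+1), ψ n z)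
        = (∫ z in x n k..x n (k+1), (((x n (k+1) + x n k)/2) * g z - z * g z)) := by
      intro k hk
      rw [intervalIntegral.integral_of_le (hlt k hk).le,
        intervalIntegral.integral_of_le (hlt k hk).le,
        MeasureTheory.integral_Ioc_eq_integral_Ioo, MeasureTheory.integral_Ioc_eq_integral_Ioo]
      exact MeasureTheory.setIntegral_congr_fun measurableSet_Ioo (hψeq k hk)
    have hterm : ∀ k ∈ Finset.range n, ((x n (k+1) + x n k)/2) *
        (∫ y in Set.Ioo (K (x n k)) (K (x n (k+1))), q y)
        = (∫ z in x n k..x n (k+1), (((x n (k+1) + x n k)/2) * g z - z * g z))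
          + ∫ z in x n k..x n (k+1), z * g z := by
      intro k hk'
      have hk := Finset.mem_range.1 hk'
      rw [hQint _ _ (hxk k hk.le) (hxk (k+1) hk) (hlt k hk).le,
        ← hFTC _ _ (hxk k hk.le) (hxk (k+1) hk) (hlt k hk).le,
        ← intervalIntegral.integral_const_mul,
        ← intervalIntegral.integral_add ((hmgII k hk).sub (hzgII k hk)) (hzgII k hk)]
      congr 1; funext z; ring
    rw [Finset.sum_congr rfl hterm, Finset.sum_add_distrib]
    have hsum1 : ∑ k ∈ Finset.range n, (∫ z in x n k..x n (k+1), z * g z)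
        = T := by
      rw [intervalIntegral.sum_integral_adjacent_intervals (fun k hk => hzgII k hk),
        hx0 n hn, hxn n hn, hT, intervalIntegral.integral_of_le hAB.le,
        MeasureTheory.integral_Ioc_eq_integral_Ioo]
    have hsum2 : ∑ k ∈ Finset.range n,
        (∫ z in x n k..x n (k+1), (((x n (k+1) + x n k)/2) * g z - z * g z))
        = ∫ z in Ioo A B, ψ n z := by
      rw [← Finset.sum_congr rfl (fun k hk => hψint_eq k (Finset.mem_range.1 hk)),
        intervalIntegral.sum_integral_adjacent_intervals (fun k hk => hψII k hk),
        hx0 n hn, hxn n hn, intervalIntegral.integral_of_le hAB.le,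
        MeasureTheory.integral_Ioc_eq_integral_Ioo]
    rw [hsum1, hsum2, add_comm]
  -- dominated convergence for the error term
  have hgmeas : AEStronglyMeasurable g (volume.restrict (Ioo A B)) := by
    have hKoo : ContinuousOn K (Ioo A B) := hKcIcc.mono Ioo_subset_Icc_self
    have hcg : ContinuousOn g (Ioo A B) := by
      apply ContinuousOn.mul
      · apply ContinuousOn.div hφ₁c.continuousOn (hφ₂c.comp_continuousOn hKoo)
        intro t ht
        exact ne_of_gt ((hpos₂ (K t)).2 (hKI2 t ht))
      · exact hquc.continuous.comp_continuousOn hKoo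
    exact hcg.aestronglyMeasurable measurableSet_Ioo
  have hψmeas : ∀ n : ℕ, AEStronglyMeasurable (ψ n) (volume.restrict (Ioo A B)) := by
    intro n
    have hkkm : Measurable (kk n) :=
      (measurable_const.mul (continuous_iff_continuousAt.2
        (fun z => (hF₁d z).continuousAt)).measurable).nat_floor
    have hm1 : Measurable fun z => (x n (kk n z + 1) + x n (kk n z))/2 - z := by
      apply Measurable.sub _ measurable_id
      apply Measurable.div_const
      exact (measurable_from_nat.comp (hkkm.add_const 1)).add (measurable_from_nat.comp hkkm)
    exact (hm1.aestronglyMeasurable.mul hgmeas)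
  have hψbdd : ∀ n : ℕ, 1 ≤ n → ∀ᵐ z ∂(volume.restrict (Ioo A B)),
      ‖ψ n z‖ ≤ (B - A) * g z := by
    intro n hn
    rw [MeasureTheory.ae_restrict_iff' measurableSet_Ioo]
    apply Eventually.of_forall
    intro z hz
    have hzIcc : z ∈ Icc A B := Ioo_subset_Icc_self hz
    have hnpos : (0:ℝ) < n := by exact_mod_cast hn
    have hkklt : kk n z < n := by
      have hF₁z : F₁ z < 1 := by
        rw [← hF₁B]; exact hF₁strict hzIcc (right_mem_Icc.2 hAB.le) hz.2
      have : (n:ℝ) * F₁ z < n := by nlinarith [hF₁nn' z hzIcc]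
      exact (Nat.floor_lt (mul_nonneg hnpos.le (hF₁nn' z hzIcc))).2 (by exact_mod_cast this)
    have hxa := hxIcc n hn (kk n z) hkklt.le
    have hxb := hxIcc n hn (kk n z + 1) hkklt
    show |((x n (kk n z + 1) + x n (kk n z))/2 - z) * g z| ≤ (B - A) * g z
    rw [abs_mul, abs_of_nonneg (hgnn z)]
    apply mul_le_mul_of_nonneg_right _ (hgnn z)
    rw [abs_le]
    constructor
    · have := hxa.1; have := hxb.1; have := hzIcc.2
      linarith
    · have := hxa.2; have := hxb.2; have := hzIcc.1
      linarith
  have hψlim : ∀ z ∈ Ioo A B, Tendsto (fun n => ψ n z) atTop (nhds 0) := by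
    intro z hz
    have hzIcc : z ∈ Icc A B := Ioo_subset_Icc_self hz
    have hF₁znn : 0 ≤ F₁ z := hF₁nn' z hzIcc
    have hkklt : ∀ n : ℕ, 1 ≤ n → kk n z < n := by
      intro n hn
      have hnpos : (0:ℝ) < n := by exact_mod_cast hn
      have hF₁z : F₁ z < 1 := by
        rw [← hF₁B]; exact hF₁strict hzIcc (right_mem_Icc.2 hAB.le) hz.2
      have : (n:ℝ) * F₁ z < n := by nlinarith
      exact (Nat.floor_lt (mul_nonneg hnpos.le hF₁znn)).2 (by exact_mod_cast this)
    have hFa : ∀ n : ℕ, 1 ≤ n → F₁ (x n (kk n z)) ≤ F₁ z := by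
      intro n hn
      have hnpos : (0:ℝ) < n := by exact_mod_cast hn
      rw [hFkv n hn _ (hkklt n hn).le]
      rw [div_le_iff₀ hnpos, mul_comm]
      exact Nat.floor_le (mul_nonneg hnpos.le hF₁znn)
    have hFb : ∀ n : ℕ, 1 ≤ n → F₁ z ≤ F₁ (x n (kk n z + 1)) := by
      intro n hn
      have hnpos : (0:ℝ) < n := by exact_mod_cast hn
      rw [hFkv n hn _ (hkklt n hn)]
      rw [le_div_iff₀ hnpos, mul_comm]
      push_cast
      exact (Nat.lt_floor_add_one ((n:ℝ) * F₁ z)).le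
    have ha_le : ∀ n : ℕ, 1 ≤ n → x n (kk n z) ≤ z := by
      intro n hn
      exact (hF₁strict.le_iff_le (hxIcc n hn _ (hkklt n hn).le) hzIcc).1 (hFa n hn)
    have hb_ge : ∀ n : ℕ, 1 ≤ n → z ≤ x n (kk n z + 1) := by
      intro n hn
      exact (hF₁strict.le_iff_le hzIcc (hxIcc n hn _ (hkklt n hn))).1 (hFb n hn)
    have hta : Tendsto (fun n => x n (kk n z)) atTop (nhds z) := by
      rw [tendsto_order]
      constructor
      · intro c hc
        rcases lt_or_ge c A with hcA | hcA
        · filter_upwards [eventually_ge_atTop 1] with n hn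
          exact lt_of_lt_of_le hcA (hxIcc n hn _ (hkklt n hn).le).1
        · have hcIcc : c ∈ Icc A B := ⟨hcA, le_trans hc.le hzIcc.2⟩
          have hFc : F₁ c < F₁ z := hF₁strict hcIcc hzIcc hc
          filter_upwards [eventually_ge_atTop 1,
            tendsto_one_div_atTop_nhds_zero_nat.eventually
              (gt_mem_nhds (by linarith : (0:ℝ) < F₁ z - F₁ c))] with n hn hlt1
          have hnpos : (0:ℝ) < n := by exact_mod_cast hn
          have h1 : F₁ c < F₁ (x n (kk n z)) := by
            rw [hFkv n hn _ (hkklt n hn).le]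
            have h2 : (n:ℝ) * F₁ z - 1 < kk n z := Nat.sub_one_lt_floor _
            rw [lt_div_iff₀ hnpos]
            have h3 : 1/(n:ℝ) * n = 1 := by field_simp
            nlinarith [mul_lt_mul_of_pos_right hlt1 hnpos, h3]
          exact (hF₁strict.lt_iff_lt hcIcc (hxIcc n hn _ (hkklt n hn).le)).1 h1
      · intro c hc
        filter_upwards [eventually_ge_atTop 1] with n hn
        exact lt_of_le_of_lt (ha_le n hn) hc
    have htb : Tendsto (fun n => x n (kk n z + 1)) atTop (nhds z) := by
      rw [tendsto_order]
      constructor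
      · intro c hc
        filter_upwards [eventually_ge_atTop 1] with n hn
        exact lt_of_lt_of_le hc (hb_ge n hn)
      · intro c hc
        rcases le_or_gt c B with hcB | hcB
        · have hcIcc : c ∈ Icc A B := ⟨le_trans hzIcc.1 hc.le, hcB⟩
          have hFc : F₁ z < F₁ c := hF₁strict hzIcc hcIcc hc
          filter_upwards [eventually_ge_atTop 1,
            tendsto_one_div_atTop_nhds_zero_nat.eventually
              (gt_mem_nhds (by linarith : (0:ℝ) < F₁ c - F₁ z))] with n hn hlt1
          have hnpos : (0:ℝ) < n := by exact_mod_cast hn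
          have h1 : F₁ (x n (kk n z + 1)) < F₁ c := by
            rw [hFkv n hn _ (hkklt n hn)]
            have h2 : (kk n z : ℝ) ≤ (n:ℝ) * F₁ z := Nat.floor_le (mul_nonneg hnpos.le hF₁znn)
            rw [div_lt_iff₀ hnpos]
            push_cast
            have h3 : 1/(n:ℝ) * n = 1 := by field_simp
            nlinarith [mul_lt_mul_of_pos_right hlt1 hnpos, h3]
          exact (hF₁strict.lt_iff_lt (hxIcc n hn _ (hkklt n hn)) hcIcc).1 h1
        · filter_upwards [eventually_ge_atTop 1] with n hn
          exact lt_of_le_of_lt (hxIcc n hn _ (hkklt n hn)).2 hcB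
    have : Tendsto (fun n => ((x n (kk n z + 1) + x n (kk n z))/2 - z) * g z)
        atTop (nhds (((z + z)/2 - z) * g z)) :=
      (((htb.add hta).div_const 2).sub tendsto_const_nhds).mul tendsto_const_nhds
    have h0 : ((z + z)/2 - z) * g z = 0 := by ring
    rw [h0] at this
    exact this
  have herr : Tendsto (fun n => ∫ z in Ioo A B, ψ n z) atTop (nhds 0) := by
    have := MeasureTheory.tendsto_integral_filter_of_dominated_convergence
      (μ := volume.restrict (Ioo A B)) (F := ψ) (f := fun _ => (0:ℝ))
      (bound := fun z => (B - A) * g z)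
      (Eventually.of_forall hψmeas)
      (by filter_upwards [eventually_ge_atTop 1] with n hn; exact hψbdd n hn)
      (hgintOoo.const_mul _)
      (by
        rw [MeasureTheory.ae_restrict_iff' measurableSet_Ioo]
        exact Eventually.of_forall hψlim)
    simpa using this
  -- conclusion
  have hfinal : Tendsto (fun n : ℕ => T + ∫ z in Ioo A B, ψ n z) atTop (nhds T) := by
    have := tendsto_const_nhds (x := T) (f := atTop (α := ℕ)) |>.add herr
    simpa using this
  apply hfinal.congr'
  filter_upwards [eventually_ge_atTop 1] with n hn
  exact (key n hn).symm
end

section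
/- Strict monotonicity under strict stochastic dominance: under the benchmark setup, assume additionally that q is continuous and strictly positive on I₂. Let φ_a and φ_b be two cash-flow densities (each continuous and positive exactly on an open interval) with CDFs satisfying F_a(t) ≥ F_b(t) for all t ∈ ℝ and F_a(t₀) > F_b(t₀) for some t₀, and assume both portfolio-value integrals are finite. Then V(φ_a) < V(φ_b). -/
open MeasureTheory Set Filter Topology

/-- Bundle of hypotheses: `φ` is a continuous probability density positive exactly on
the open order-connected set `I`. -/
structure IsDens (φ : ℝ → ℝ) (I : Set ℝ) : Prop where
  cont : Continuous φ
  nn : ∀ x, 0 ≤ φ x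
  int : Integrable φ
  one : ∫ x, φ x = 1
  opn : IsOpen I
  conn : I.OrdConnected
  pos : ∀ x, 0 < φ x ↔ x ∈ I

namespace IsDens

variable {φ : ℝ → ℝ} {I : Set ℝ}

lemma zero_outside (h : IsDens φ I) {x : ℝ} (hx : x ∉ I) : φ x = 0 :=
  ((h.nn x).lt_or_eq.resolve_left fun hlt => hx ((h.pos x).1 hlt)).symm

lemma cdf_sub (h : IsDens φ I) (a b : ℝ) :
    cdfOf φ b - cdfOf φ a = ∫ x in a..b, φ x :=
  intervalIntegral.integral_Iic_sub_Iic h.int.integrableOn h.int.integrableOn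

lemma cdf_hasDerivAt (h : IsDens φ I) (x : ℝ) : HasDerivAt (cdfOf φ) (φ x) x := by
  have key : HasDerivAt (fun b => cdfOf φ 0 + ∫ t in (0:ℝ)..b, φ t) (φ x) x := by
    exact (intervalIntegral.integral_hasDerivAt_right h.int.intervalIntegrable
      h.cont.stronglyMeasurable.stronglyMeasurableAtFilter h.cont.continuousAt).const_add _
  have : (fun b => cdfOf φ 0 + ∫ t in (0:ℝ)..b, φ t) = cdfOf φ := by
    funext b
    rw [← h.cdf_sub 0 b]; ring
  rwa [this] at key

lemma cdf_cont (h : IsDens φ I) : Continuous (cdfOf φ) :=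
  continuous_iff_continuousAt.2 fun x => (h.cdf_hasDerivAt x).continuousAt

lemma cdf_mono (h : IsDens φ I) : Monotone (cdfOf φ) := by
  intro a b hab
  have := h.cdf_sub a b
  have hnn : 0 ≤ ∫ x in a..b, φ x :=
    intervalIntegral.integral_nonneg hab fun x _ => h.nn x
  linarith

lemma cdf_nonneg (h : IsDens φ I) (x : ℝ) : 0 ≤ cdfOf φ x :=
  setIntegral_nonneg measurableSet_Iic fun t _ => h.nn t

lemma cdf_le_one (h : IsDens φ I) (x : ℝ) : cdfOf φ x ≤ 1 := by
  have hsum := intervalIntegral.integral_Iic_add_Ioi (μ := volume) (f := φ) (b := x)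
    h.int.integrableOn h.int.integrableOn
  have h2 : 0 ≤ ∫ t in Ioi x, φ t := setIntegral_nonneg measurableSet_Ioi fun t _ => h.nn t
  have h1 := h.one
  simp only [cdfOf]
  linarith

/-- A point near `v` inside `I`, weakly to the right of `u`. -/
lemma lt_of_right (h : IsDens φ I) {u v : ℝ} (huv : u < v) (hv : v ∈ I) :
    cdfOf φ u < cdfOf φ v := by
  obtain ⟨ε, hε, hball⟩ := Metric.isOpen_iff.1 h.opn v hv
  set w := max u (v - ε / 2) with hw
  have hwv : w < v := by
    apply max_lt huv; linarith
  have hwI : w ∈ I := by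
    rcases le_or_gt u (v - ε / 2) with hc | hc
    · have : w = v - ε / 2 := max_eq_right hc
      rw [this]; apply hball; rw [Real.ball_eq_Ioo]; constructor <;> [linarith; linarith]
    · have : w = u := max_eq_left hc.le
      rw [this]; apply hball; rw [Real.ball_eq_Ioo]; constructor <;> [linarith; linarith]
  have hsub : Ioo w v ⊆ I := fun t ht => h.conn.out hwI hv ⟨ht.1.le, ht.2.le⟩
  have hpos : 0 < ∫ x in w..v, φ x :=
    intervalIntegral.intervalIntegral_pos_of_pos_on h.int.intervalIntegrable
      (fun t ht => (h.pos t).2 (hsub ht)) hwv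
  have h1 := h.cdf_sub w v
  have h2 : cdfOf φ u ≤ cdfOf φ w := h.cdf_mono (le_max_left _ _)
  linarith

lemma lt_of_left (h : IsDens φ I) {u v : ℝ} (huv : u < v) (hu : u ∈ I) :
    cdfOf φ u < cdfOf φ v := by
  obtain ⟨ε, hε, hball⟩ := Metric.isOpen_iff.1 h.opn u hu
  set w := min v (u + ε / 2) with hw
  have huw : u < w := by
    apply lt_min huv; linarith
  have hwI : w ∈ I := by
    rcases le_or_gt (u + ε / 2) v with hc | hc
    · have : w = u + ε / 2 := min_eq_right hc
      rw [this]; apply hball; rw [Real.ball_eq_Ioo]; constructor <;> [linarith; linarith]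
    · have : w = v := min_eq_left hc.le
      rw [this]; apply hball; rw [Real.ball_eq_Ioo]; constructor <;> [linarith; linarith]
  have hsub : Ioo u w ⊆ I := fun t ht => h.conn.out hu hwI ⟨ht.1.le, ht.2.le⟩
  have hpos : 0 < ∫ x in u..w, φ x :=
    intervalIntegral.intervalIntegral_pos_of_pos_on h.int.intervalIntegrable
      (fun t ht => (h.pos t).2 (hsub ht)) huw
  have h1 := h.cdf_sub u w
  have h2 : cdfOf φ w ≤ cdfOf φ v := h.cdf_mono (min_le_left _ _)
  linarith

lemma cdf_pos (h : IsDens φ I) {x : ℝ} (hx : x ∈ I) : 0 < cdfOf φ x := by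
  obtain ⟨ε, hε, hball⟩ := Metric.isOpen_iff.1 h.opn x hx
  have hu : x - ε / 2 ∈ I := by
    apply hball; rw [Real.ball_eq_Ioo]; constructor <;> linarith
  have := h.lt_of_left (show x - ε / 2 < x by linarith) hu
  have := h.cdf_nonneg (x - ε / 2)
  linarith

lemma cdf_lt_one (h : IsDens φ I) {x : ℝ} (hx : x ∈ I) : cdfOf φ x < 1 := by
  obtain ⟨ε, hε, hball⟩ := Metric.isOpen_iff.1 h.opn x hx
  have hu : x + ε / 2 ∈ I := by
    apply hball; rw [Real.ball_eq_Ioo]; constructor <;> linarith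
  have := h.lt_of_right (show x < x + ε / 2 by linarith) hu
  have := h.cdf_le_one (x + ε / 2)
  linarith

lemma exists_cdf_lt (h : IsDens φ I) {p : ℝ} (hp : 0 < p) : ∃ a : ℝ, cdfOf φ a < p := by
  have htend : Tendsto (fun n : ℕ => cdfOf φ (-(n:ℝ))) atTop (𝓝 0) := by
    have : ∀ n : ℕ, cdfOf φ (-(n:ℝ)) = ∫ t, (Set.Iic (-(n:ℝ))).indicator φ t := by
      intro n; rw [integral_indicator measurableSet_Iic]; rfl
    simp only [this]
    have h0 : (0:ℝ) = ∫ (t : ℝ), (0:ℝ) := by simp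
    rw [h0]
    apply tendsto_integral_of_dominated_convergence φ
      (fun n => (h.int.aestronglyMeasurable.indicator measurableSet_Iic))
      h.int
      (fun n => Filter.Eventually.of_forall fun t =>
        (norm_indicator_le_norm_self φ t).trans_eq (Real.norm_of_nonneg (h.nn t)))
      (Filter.Eventually.of_forall fun t => ?_)
    have : ∀ᶠ n : ℕ in atTop, (Set.Iic (-(n:ℝ))).indicator φ t = 0 := by
      obtain ⟨N, hN⟩ := exists_nat_gt (-t)
      filter_upwards [eventually_ge_atTop N] with n hn
      apply Set.indicator_of_notMem
      simp only [Set.mem_Iic, not_le]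
      have : (N:ℝ) ≤ (n:ℝ) := by exact_mod_cast hn
      linarith
    exact Tendsto.congr' (this.mono fun n hn => hn.symm) tendsto_const_nhds
  obtain ⟨n, hn⟩ := (htend.eventually (eventually_lt_nhds hp)).exists
  exact ⟨-(n:ℝ), hn⟩

lemma exists_lt_cdf (h : IsDens φ I) {p : ℝ} (hp : p < 1) : ∃ b : ℝ, p < cdfOf φ b := by
  have htend : Tendsto (fun n : ℕ => cdfOf φ (n:ℝ)) atTop (𝓝 1) := by
    have heq : ∀ n : ℕ, cdfOf φ (n:ℝ) = ∫ t, (Set.Iic ((n:ℝ))).indicator φ t := by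
      intro n; rw [integral_indicator measurableSet_Iic]; rfl
    simp only [heq]
    rw [← h.one]
    apply tendsto_integral_of_dominated_convergence φ
      (fun n => (h.int.aestronglyMeasurable.indicator measurableSet_Iic))
      h.int
      (fun n => Filter.Eventually.of_forall fun t =>
        (norm_indicator_le_norm_self φ t).trans_eq (Real.norm_of_nonneg (h.nn t)))
      (Filter.Eventually.of_forall fun t => ?_)
    have : ∀ᶠ n : ℕ in atTop, (Set.Iic ((n:ℝ))).indicator φ t = φ t := by
      obtain ⟨N, hN⟩ := exists_nat_gt t
      filter_upwards [eventually_ge_atTop N] with n hn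
      apply Set.indicator_of_mem
      simp only [Set.mem_Iic]
      have : (N:ℝ) ≤ (n:ℝ) := by exact_mod_cast hn
      linarith
    exact Tendsto.congr' (this.mono fun n hn => hn.symm) tendsto_const_nhds
  obtain ⟨n, hn⟩ := (htend.eventually (eventually_gt_nhds hp)).exists
  exact ⟨(n:ℝ), hn⟩

lemma mem_of_cdf_mem (h : IsDens φ I) {x p : ℝ} (hp : p ∈ Ioo (0:ℝ) 1)
    (hx : cdfOf φ x = p) : x ∈ I := by
  by_contra hxI
  have hcases : (∀ t ∈ I, x < t) ∨ (∀ t ∈ I, t < x) := by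
    by_contra hc
    push_neg at hc
    obtain ⟨⟨u, hu, hux⟩, ⟨v, hv, hxv⟩⟩ := hc
    exact hxI (h.conn.out hu hv ⟨hux, hxv⟩)
  rcases hcases with hbelow | habove
  · have : cdfOf φ x = 0 := by
      have : EqOn φ (fun _ => (0:ℝ)) (Iic x) := by
        intro t ht
        apply h.zero_outside
        intro htI
        exact absurd ht (not_le.2 (hbelow t htI))
      unfold cdfOf
      rw [setIntegral_congr_fun measurableSet_Iic this]
      simp
    rw [hx] at this; exact absurd this (ne_of_gt hp.1)
  · have hIoi : ∫ t in Ioi x, φ t = 0 := by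
      have : EqOn φ (fun _ => (0:ℝ)) (Ioi x) := by
        intro t ht
        apply h.zero_outside
        intro htI
        exact absurd ht (not_lt.2 (habove t htI).le)
      rw [setIntegral_congr_fun measurableSet_Ioi this]
      simp
    have hsum := intervalIntegral.integral_Iic_add_Ioi (μ := volume) (f := φ) (b := x)
      h.int.integrableOn h.int.integrableOn
    have h1 := h.one
    have : cdfOf φ x = 1 := by unfold cdfOf; linarith
    rw [hx] at this; exact absurd this (ne_of_lt hp.2)

lemma surj (h : IsDens φ I) {p : ℝ} (hp : p ∈ Ioo (0:ℝ) 1) :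
    ∃ x ∈ I, cdfOf φ x = p := by
  obtain ⟨a, ha⟩ := h.exists_cdf_lt hp.1
  obtain ⟨b, hb⟩ := h.exists_lt_cdf hp.2
  have hab : a ≤ b := by
    by_contra hc
    push_neg at hc
    have := h.cdf_mono hc.le
    linarith
  have hiv := intermediate_value_Ioo hab (h.cdf_cont.continuousOn (s := Icc a b))
  obtain ⟨x, _, hxp⟩ := hiv (show p ∈ Ioo (cdfOf φ a) (cdfOf φ b) from ⟨ha, hb⟩)
  exact ⟨x, h.mem_of_cdf_mem hp hxp, hxp⟩

end IsDens

section Kmap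

variable {φ₁ φ₂ : ℝ → ℝ} {I₁ I₂ : Set ℝ} {K : ℝ → ℝ}

/-- The binding map is strictly monotone on `I₁`. -/
lemma K_strictMonoOn (h₁ : IsDens φ₁ I₁) (h₂ : IsDens φ₂ I₂)
    (hK : ∀ x ∈ I₁, K x ∈ I₂ ∧ cdfOf φ₂ (K x) = cdfOf φ₁ x) :
    StrictMonoOn K I₁ := by
  intro x hx y hy hxy
  have h1 : cdfOf φ₂ (K x) < cdfOf φ₂ (K y) := by
    rw [(hK x hx).2, (hK y hy).2]
    exact h₁.lt_of_left hxy hx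
  by_contra hc
  push_neg at hc
  exact absurd (h₂.cdf_mono hc) (not_le.2 h1)

lemma K_image (h₁ : IsDens φ₁ I₁) (h₂ : IsDens φ₂ I₂)
    (hK : ∀ x ∈ I₁, K x ∈ I₂ ∧ cdfOf φ₂ (K x) = cdfOf φ₁ x) :
    K '' I₁ = I₂ := by
  apply Set.Subset.antisymm
  · rintro _ ⟨x, hx, rfl⟩; exact (hK x hx).1
  · intro y hy
    have hp : cdfOf φ₂ y ∈ Ioo (0:ℝ) 1 := ⟨h₂.cdf_pos hy, h₂.cdf_lt_one hy⟩
    obtain ⟨x, hxI, hxcdf⟩ := h₁.surj hp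
    refine ⟨x, hxI, ?_⟩
    have h1 : cdfOf φ₂ (K x) = cdfOf φ₂ y := by rw [(hK x hxI).2, hxcdf]
    by_contra hne
    rcases lt_or_gt_of_ne hne with hlt | hlt
    · exact absurd h1 (ne_of_lt (h₂.lt_of_left hlt (hK x hxI).1))
    · exact absurd h1.symm (ne_of_lt (h₂.lt_of_right hlt (hK x hxI).1))

/-- The binding map is differentiable on `I₁` with derivative `φ₁ / (φ₂ ∘ K)`. -/
lemma K_hasDerivAt (h₁ : IsDens φ₁ I₁) (h₂ : IsDens φ₂ I₂)
    (hK : ∀ x ∈ I₁, K x ∈ I₂ ∧ cdfOf φ₂ (K x) = cdfOf φ₁ x)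
    {x₀ : ℝ} (hx₀ : x₀ ∈ I₁) :
    HasDerivAt K (φ₁ x₀ / φ₂ (K x₀)) x₀ := by
  classical
  -- the inverse of F₂ on (0,1)
  set G : ℝ → ℝ := fun p => if h : ∃ y ∈ I₂, cdfOf φ₂ y = p then h.choose else 0 with hGdef
  have hG : ∀ p ∈ Ioo (0:ℝ) 1, G p ∈ I₂ ∧ cdfOf φ₂ (G p) = p := by
    intro p hp
    have hex : ∃ y ∈ I₂, cdfOf φ₂ y = p := h₂.surj hp
    simp only [hGdef, dif_pos hex]
    exact ⟨hex.choose_spec.1, hex.choose_spec.2⟩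
  have hGinj : ∀ y ∈ I₂, G (cdfOf φ₂ y) = y := by
    intro y hy
    have hp : cdfOf φ₂ y ∈ Ioo (0:ℝ) 1 := ⟨h₂.cdf_pos hy, h₂.cdf_lt_one hy⟩
    obtain ⟨hGI, hGcdf⟩ := hG _ hp
    by_contra hne
    rcases lt_or_gt_of_ne hne with hlt | hlt
    · exact absurd hGcdf (ne_of_lt (h₂.lt_of_left hlt hGI))
    · exact absurd hGcdf.symm (ne_of_lt (h₂.lt_of_left hlt hy))
  set y₀ := K x₀ with hy₀
  have hy₀I : y₀ ∈ I₂ := (hK x₀ hx₀).1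
  set p₀ := cdfOf φ₁ x₀ with hp₀
  have hp₀eq : cdfOf φ₂ y₀ = p₀ := (hK x₀ hx₀).2
  have hp₀mem : p₀ ∈ Ioo (0:ℝ) 1 := hp₀eq ▸ ⟨h₂.cdf_pos hy₀I, h₂.cdf_lt_one hy₀I⟩
  have hGp₀ : G p₀ = y₀ := by rw [← hp₀eq]; exact hGinj y₀ hy₀I
  -- continuity of G at p₀
  have hGcont : ContinuousAt G p₀ := by
    rw [Metric.continuousAt_iff]
    intro ε hε
    obtain ⟨ε', hε', hball⟩ := Metric.isOpen_iff.1 h₂.opn y₀ hy₀I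
    set δ₁ := min ε ε' / 2 with hδ₁
    have hδ₁pos : 0 < δ₁ := by positivity
    have hlo : y₀ - δ₁ ∈ I₂ := by
      apply hball; rw [Real.ball_eq_Ioo]
      have : δ₁ < ε' := by
        have := min_le_right ε ε'; simp only [hδ₁]; linarith
      constructor <;> linarith
    have hhi : y₀ + δ₁ ∈ I₂ := by
      apply hball; rw [Real.ball_eq_Ioo]
      have : δ₁ < ε' := by
        have := min_le_right ε ε'; simp only [hδ₁]; linarith
      constructor <;> linarith
    have h1 : cdfOf φ₂ (y₀ - δ₁) < p₀ := by
      rw [← hp₀eq]; exact h₂.lt_of_left (by linarith) hlo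
    have h2 : p₀ < cdfOf φ₂ (y₀ + δ₁) := by
      rw [← hp₀eq]; exact h₂.lt_of_right (by linarith) hhi
    refine ⟨min (p₀ - cdfOf φ₂ (y₀ - δ₁)) (cdfOf φ₂ (y₀ + δ₁) - p₀), lt_min (by linarith) (by linarith), ?_⟩
    intro p hp
    rw [Real.dist_eq] at hp
    have hp1 : cdfOf φ₂ (y₀ - δ₁) < p := by
      have := abs_lt.1 hp
      have := min_le_left (p₀ - cdfOf φ₂ (y₀ - δ₁)) (cdfOf φ₂ (y₀ + δ₁) - p₀)
      linarith [this, (abs_lt.1 hp).1]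
    have hp2 : p < cdfOf φ₂ (y₀ + δ₁) := by
      have := min_le_right (p₀ - cdfOf φ₂ (y₀ - δ₁)) (cdfOf φ₂ (y₀ + δ₁) - p₀)
      linarith [this, (abs_lt.1 hp).2]
    have hpmem : p ∈ Ioo (0:ℝ) 1 := by
      constructor
      · exact lt_of_le_of_lt (h₂.cdf_nonneg _) hp1
      · exact lt_of_lt_of_le hp2 (h₂.cdf_le_one _)
    obtain ⟨hGpI, hGpcdf⟩ := hG p hpmem
    have hl : y₀ - δ₁ < G p := by
      by_contra hc
      push_neg at hc
      have := h₂.cdf_mono hc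
      rw [hGpcdf] at this
      linarith
    have hr : G p < y₀ + δ₁ := by
      by_contra hc
      push_neg at hc
      have := h₂.cdf_mono hc
      rw [hGpcdf] at this
      linarith
    rw [Real.dist_eq, hGp₀, abs_lt]
    have : δ₁ ≤ ε := by
      have := min_le_left ε ε'; simp only [hδ₁]; linarith
    constructor <;> linarith
  -- derivative of G at p₀ by the inverse function theorem
  have hφ₂pos : 0 < φ₂ y₀ := (h₂.pos y₀).2 hy₀I
  have hGderiv : HasDerivAt G (φ₂ y₀)⁻¹ p₀ := by
    have hfg : ∀ᶠ p in 𝓝 p₀, cdfOf φ₂ (G p) = p := by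
      filter_upwards [Ioo_mem_nhds hp₀mem.1 hp₀mem.2] with p hp
      exact (hG p hp).2
    have := HasDerivAt.of_local_left_inverse hGcont
      (hGp₀ ▸ h₂.cdf_hasDerivAt y₀) (ne_of_gt (hGp₀ ▸ hφ₂pos)) hfg
    rwa [hGp₀] at this
  -- chain rule and local agreement
  have hcomp : HasDerivAt (fun x => G (cdfOf φ₁ x)) ((φ₂ y₀)⁻¹ * φ₁ x₀) x₀ :=
    by have := HasDerivAt.comp x₀ hGderiv (h₁.cdf_hasDerivAt x₀); exact this
  have heq : K =ᶠ[𝓝 x₀] fun x => G (cdfOf φ₁ x) := by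
    filter_upwards [h₁.opn.mem_nhds hx₀] with x hx
    obtain ⟨hKI, hKcdf⟩ := hK x hx
    rw [← hKcdf]
    exact (hGinj _ hKI).symm
  have := hcomp.congr_of_eventuallyEq heq
  rwa [div_eq_inv_mul]

end Kmap

/-- Strict monotonicity under strict stochastic dominance: with cash-flow
densities `φa`, `φb` (continuous, positive exactly on open intervals `Ia`, `Ib`) whose
CDFs satisfy `Fa ≥ Fb` pointwise and `Fa t₀ > Fb t₀` at some point `t₀`, with `q`
continuous and strictly positive on `I₂`, and with finite portfolio values, one has
`V(φa) < V(φb)`. -/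
theorem stmt6
    (φ₂ q φa φb : ℝ → ℝ) (I₂ Ia Ib : Set ℝ)
    (hφ₂c : Continuous φ₂) (hφ₂nn : ∀ x, 0 ≤ φ₂ x)
    (hφ₂i : Integrable φ₂) (hφ₂1 : ∫ x, φ₂ x = 1)
    (hI₂o : IsOpen I₂) (hI₂conn : I₂.OrdConnected)
    (hpos₂ : ∀ x, 0 < φ₂ x ↔ x ∈ I₂)
    (hqnn : ∀ y, 0 ≤ q y) (hqi : Integrable q)
    (hqc : ContinuousOn q I₂) (hqpos : ∀ y ∈ I₂, 0 < q y)
    (hφac : Continuous φa) (hφann : ∀ x, 0 ≤ φa x)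
    (hφai : Integrable φa) (hφa1 : ∫ x, φa x = 1)
    (hIao : IsOpen Ia) (hIaconn : Ia.OrdConnected)
    (hposa : ∀ x, 0 < φa x ↔ x ∈ Ia)
    (hφbc : Continuous φb) (hφbnn : ∀ x, 0 ≤ φb x)
    (hφbi : Integrable φb) (hφb1 : ∫ x, φb x = 1)
    (hIbo : IsOpen Ib) (hIbconn : Ib.OrdConnected)
    (hposb : ∀ x, 0 < φb x ↔ x ∈ Ib)
    (Ka Kb : ℝ → ℝ)
    (hKa : ∀ x ∈ Ia, Ka x ∈ I₂ ∧ cdfOf φ₂ (Ka x) = cdfOf φa x)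
    (hKb : ∀ x ∈ Ib, Kb x ∈ I₂ ∧ cdfOf φ₂ (Kb x) = cdfOf φb x)
    (hdom : ∀ t, cdfOf φb t ≤ cdfOf φa t)
    (hstrict : ∃ t₀, cdfOf φb t₀ < cdfOf φa t₀)
    (hinta : IntegrableOn (fun x => x * (φa x / φ₂ (Ka x)) * q (Ka x)) Ia)
    (hintb : IntegrableOn (fun x => x * (φb x / φ₂ (Kb x)) * q (Kb x)) Ib) :
    (∫ x in Ia, x * (φa x / φ₂ (Ka x)) * q (Ka x))
      < ∫ x in Ib, x * (φb x / φ₂ (Kb x)) * q (Kb x) := by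
  classical
  have h₂ : IsDens φ₂ I₂ := ⟨hφ₂c, hφ₂nn, hφ₂i, hφ₂1, hI₂o, hI₂conn, hpos₂⟩
  have ha : IsDens φa Ia := ⟨hφac, hφann, hφai, hφa1, hIao, hIaconn, hposa⟩
  have hb : IsDens φb Ib := ⟨hφbc, hφbnn, hφbi, hφb1, hIbo, hIbconn, hposb⟩
  -- inverse binding maps
  set La : ℝ → ℝ := fun y => if h : ∃ x ∈ Ia, cdfOf φa x = cdfOf φ₂ y then h.choose else 0
    with hLadef
  set Lb : ℝ → ℝ := fun y => if h : ∃ x ∈ Ib, cdfOf φb x = cdfOf φ₂ y then h.choose else 0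
    with hLbdef
  have hLa : ∀ y ∈ I₂, La y ∈ Ia ∧ cdfOf φa (La y) = cdfOf φ₂ y := by
    intro y hy
    have hex : ∃ x ∈ Ia, cdfOf φa x = cdfOf φ₂ y :=
      ha.surj ⟨h₂.cdf_pos hy, h₂.cdf_lt_one hy⟩
    simp only [hLadef, dif_pos hex]
    exact ⟨hex.choose_spec.1, hex.choose_spec.2⟩
  have hLb : ∀ y ∈ I₂, Lb y ∈ Ib ∧ cdfOf φb (Lb y) = cdfOf φ₂ y := by
    intro y hy
    have hex : ∃ x ∈ Ib, cdfOf φb x = cdfOf φ₂ y :=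
      hb.surj ⟨h₂.cdf_pos hy, h₂.cdf_lt_one hy⟩
    simp only [hLbdef, dif_pos hex]
    exact ⟨hex.choose_spec.1, hex.choose_spec.2⟩
  -- La (Ka x) = x for x ∈ Ia
  have hLaKa : ∀ x ∈ Ia, La (Ka x) = x := by
    intro x hx
    obtain ⟨hKI, hKcdf⟩ := hKa x hx
    obtain ⟨hLI, hLcdf⟩ := hLa _ hKI
    rw [hKcdf] at hLcdf
    by_contra hne
    rcases lt_or_gt_of_ne hne with hlt | hlt
    · exact absurd hLcdf (ne_of_lt (ha.lt_of_left hlt hLI))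
    · exact absurd hLcdf.symm (ne_of_lt (ha.lt_of_left hlt hx))
  have hLbKb : ∀ x ∈ Ib, Lb (Kb x) = x := by
    intro x hx
    obtain ⟨hKI, hKcdf⟩ := hKb x hx
    obtain ⟨hLI, hLcdf⟩ := hLb _ hKI
    rw [hKcdf] at hLcdf
    by_contra hne
    rcases lt_or_gt_of_ne hne with hlt | hlt
    · exact absurd hLcdf (ne_of_lt (hb.lt_of_left hlt hLI))
    · exact absurd hLcdf.symm (ne_of_lt (hb.lt_of_left hlt hx))
  -- change of variables
  have hKaDeriv : ∀ x ∈ Ia, HasDerivWithinAt Ka (φa x / φ₂ (Ka x)) Ia x :=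
    fun x hx => (K_hasDerivAt ha h₂ hKa hx).hasDerivWithinAt
  have hKbDeriv : ∀ x ∈ Ib, HasDerivWithinAt Kb (φb x / φ₂ (Kb x)) Ib x :=
    fun x hx => (K_hasDerivAt hb h₂ hKb hx).hasDerivWithinAt
  have hKaInj : Set.InjOn Ka Ia := (K_strictMonoOn ha h₂ hKa).injOn
  have hKbInj : Set.InjOn Kb Ib := (K_strictMonoOn hb h₂ hKb).injOn
  have hKaIm : Ka '' Ia = I₂ := K_image ha h₂ hKa
  have hKbIm : Kb '' Ib = I₂ := K_image hb h₂ hKb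
  have hEqOnA : Set.EqOn (fun x => x * (φa x / φ₂ (Ka x)) * q (Ka x))
      (fun x => |φa x / φ₂ (Ka x)| • ((fun y => La y * q y) (Ka x))) Ia := by
    intro x hx
    have h1 : 0 < φa x := (hposa x).2 hx
    have h2 : 0 < φ₂ (Ka x) := (hpos₂ _).2 (hKa x hx).1
    simp only [smul_eq_mul, hLaKa x hx, abs_of_pos (div_pos h1 h2)]
    ring
  have hEqOnB : Set.EqOn (fun x => x * (φb x / φ₂ (Kb x)) * q (Kb x))
      (fun x => |φb x / φ₂ (Kb x)| • ((fun y => Lb y * q y) (Kb x))) Ib := by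
    intro x hx
    have h1 : 0 < φb x := (hposb x).2 hx
    have h2 : 0 < φ₂ (Kb x) := (hpos₂ _).2 (hKb x hx).1
    simp only [smul_eq_mul, hLbKb x hx, abs_of_pos (div_pos h1 h2)]
    ring
  have hCOVa : (∫ x in Ia, x * (φa x / φ₂ (Ka x)) * q (Ka x))
      = ∫ y in I₂, La y * q y := by
    rw [setIntegral_congr_fun hIao.measurableSet hEqOnA, ← hKaIm,
      MeasureTheory.integral_image_eq_integral_abs_deriv_smul hIao.measurableSet hKaDeriv hKaInj]
  have hCOVb : (∫ x in Ib, x * (φb x / φ₂ (Kb x)) * q (Kb x))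
      = ∫ y in I₂, Lb y * q y := by
    rw [setIntegral_congr_fun hIbo.measurableSet hEqOnB, ← hKbIm,
      MeasureTheory.integral_image_eq_integral_abs_deriv_smul hIbo.measurableSet hKbDeriv hKbInj]
  -- transfer integrability
  have hintA : IntegrableOn (fun y => La y * q y) I₂ := by
    rw [← hKaIm, MeasureTheory.integrableOn_image_iff_integrableOn_abs_deriv_smul
      hIao.measurableSet hKaDeriv hKaInj]
    exact (hinta.congr_fun hEqOnA hIao.measurableSet)
  have hintB : IntegrableOn (fun y => Lb y * q y) I₂ := by
    rw [← hKbIm, MeasureTheory.integrableOn_image_iff_integrableOn_abs_deriv_smul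
      hIbo.measurableSet hKbDeriv hKbInj]
    exact (hintb.congr_fun hEqOnB hIbo.measurableSet)
  rw [hCOVa, hCOVb]
  -- pointwise comparison on I₂
  have hle : ∀ y ∈ I₂, La y ≤ Lb y := by
    intro y hy
    obtain ⟨haI, hacdf⟩ := hLa y hy
    obtain ⟨hbI, hbcdf⟩ := hLb y hy
    by_contra hc
    push_neg at hc
    have h1 : cdfOf φa (La y) ≤ cdfOf φa (Lb y) := by
      rw [hacdf, ← hbcdf]; exact hdom _
    have h2 : cdfOf φa (Lb y) < cdfOf φa (La y) := ha.lt_of_right hc haI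
    linarith
  -- strict inequality on a small ball
  obtain ⟨t₀, ht₀⟩ := hstrict
  set p : ℝ := (cdfOf φb t₀ + cdfOf φa t₀) / 2 with hp
  have hpmem : p ∈ Ioo (0:ℝ) 1 := by
    constructor
    · have := hb.cdf_nonneg t₀; simp only [hp]; linarith
    · have := ha.cdf_le_one t₀; simp only [hp]; linarith
  obtain ⟨y₀, hy₀I, hy₀p⟩ := h₂.surj hpmem
  have hLaLt : La y₀ < Lb y₀ := by
    obtain ⟨haI, hacdf⟩ := hLa y₀ hy₀I
    obtain ⟨hbI, hbcdf⟩ := hLb y₀ hy₀I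
    rw [hy₀p] at hacdf hbcdf
    have h1 : La y₀ < t₀ := by
      by_contra hc
      push_neg at hc
      have := ha.cdf_mono hc
      simp only [hp] at hacdf
      linarith
    have h2 : t₀ < Lb y₀ := by
      by_contra hc
      push_neg at hc
      have := hb.cdf_mono hc
      simp only [hp] at hbcdf
      linarith
    linarith
  -- the difference function
  set D : ℝ → ℝ := fun y => Lb y * q y - La y * q y with hD
  have hintD : IntegrableOn D I₂ := hintB.sub hintA
  have hDnn : ∀ y ∈ I₂, 0 ≤ D y :=
    fun y hy => by
      simp only [hD, ← sub_mul]
      exact mul_nonneg (by linarith [hle y hy]) (hqnn _)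
  have hDy₀ : 0 < D y₀ := by
    simp only [hD, ← sub_mul]
    exact mul_pos (by linarith) (hqpos _ hy₀I)
  -- continuity of D at y₀
  have hLaCont : ContinuousAt La y₀ := (K_hasDerivAt h₂ ha hLa hy₀I).continuousAt
  have hLbCont : ContinuousAt Lb y₀ := (K_hasDerivAt h₂ hb hLb hy₀I).continuousAt
  have hqCont : ContinuousAt q y₀ := hqc.continuousAt (hI₂o.mem_nhds hy₀I)
  have hDCont : ContinuousAt D y₀ := ((hLbCont.mul hqCont).sub (hLaCont.mul hqCont))
  -- find a closed interval where D is bounded below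
  have hEv : ∀ᶠ y in 𝓝 y₀, D y₀ / 2 < D y ∧ y ∈ I₂ := by
    have h1 : ∀ᶠ y in 𝓝 y₀, D y₀ / 2 < D y :=
      hDCont.eventually_mem (Ioi_mem_nhds (half_lt_self hDy₀))
    filter_upwards [h1, hI₂o.mem_nhds hy₀I] with y hy1 hy2
    exact ⟨hy1, hy2⟩
  obtain ⟨r, hr, hball⟩ := Metric.eventually_nhds_iff_ball.1 hEv
  set c := y₀ - r / 2 with hc
  set d := y₀ + r / 2 with hd
  have hIccSub : Icc c d ⊆ Metric.ball y₀ r := by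
    intro t ht
    rw [Metric.mem_ball, Real.dist_eq, abs_lt]
    obtain ⟨h1, h2⟩ := ht
    constructor <;> [simp only [hc] at h1; simp only [hd] at h2] <;> linarith
  have hIccI₂ : Icc c d ⊆ I₂ := fun t ht => (hball t (hIccSub ht)).2
  -- lower bound on the integral over [c, d]
  have hintDIcc : IntegrableOn D (Icc c d) := hintD.mono_set hIccI₂
  have h1 : (D y₀ / 2) * (d - c) ≤ ∫ y in Icc c d, D y := by
    have hconst : (∫ _ in Icc c d, (D y₀ / 2)) = (D y₀ / 2) * (d - c) := by
      rw [setIntegral_const, measureReal_def, Real.volume_Icc, smul_eq_mul]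
      rw [ENNReal.toReal_ofReal (by simp only [hc, hd]; linarith)]
      ring
    rw [← hconst]
    apply setIntegral_mono_on (integrableOn_const (by
      rw [Real.volume_Icc]; exact ENNReal.ofReal_lt_top.ne)) hintDIcc measurableSet_Icc
    intro t ht
    exact (hball t (hIccSub ht)).1.le
  have h2 : (∫ y in Icc c d, D y) ≤ ∫ y in I₂, D y := by
    apply setIntegral_mono_set hintD
    · rw [EventuallyLE, ae_restrict_iff' hI₂o.measurableSet]
      filter_upwards with y hy using hDnn y hy
    · exact HasSubset.Subset.eventuallyLE hIccI₂
  have h3 : (∫ y in I₂, Lb y * q y) - ∫ y in I₂, La y * q y = ∫ y in I₂, D y := by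
    rw [← integral_sub hintB hintA]
  have hdc : 0 < d - c := by simp only [hc, hd]; linarith
  have : 0 < ∫ y in I₂, D y := by
    have : 0 < (D y₀ / 2) * (d - c) := mul_pos (half_pos hDy₀) hdc
    linarith
  linarith
end

section
/- Breeden–Litzenberger formula: let Q be a Borel probability measure on ℝ with finite first moment that has a continuous density g with respect to Lebesgue measure, let B > 0, and define C(K) := B · ∫ (x − K)⁺ dQ(x). Then C is twice differentiable at every K ∈ ℝ and C''(K) = B · g(K); that is, the state-price density is recovered as the second derivative of the call price with respect to the strike. -/
open MeasureTheory Set Filter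


lemma tail_deriv (g : ℝ → ℝ) (hgc : Continuous g) (hgi : Integrable g) (K : ℝ) :
    HasDerivAt (fun K => ∫ x in Set.Ioi K, g x) (-(g K)) K := by
  have heq : (fun K => ∫ x in Set.Ioi K, g x)
      = fun K => ((∫ x, g x) - ∫ x in Set.Iic (0:ℝ), g x) - ∫ t in (0:ℝ)..K, g t := by
    funext K
    have h1 : (∫ x in Set.Iic K, g x) + ∫ x in Set.Ioi K, g x = ∫ x, g x := by
      rw [← compl_Iic]
      exact integral_add_compl measurableSet_Iic hgi
    have h2 : (∫ x in Set.Iic K, g x) - ∫ x in Set.Iic (0:ℝ), g x = ∫ t in (0:ℝ)..K, g t :=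
      intervalIntegral.integral_Iic_sub_Iic hgi.integrableOn hgi.integrableOn
    linarith
  rw [heq]
  have hftc : HasDerivAt (fun K => ∫ t in (0:ℝ)..K, g t) (g K) K :=
    intervalIntegral.integral_hasDerivAt_right hgi.intervalIntegrable
      (hgc.stronglyMeasurableAtFilter _ _) hgc.continuousAt
  exact ((hasDerivAt_const K _).sub hftc).congr_deriv (by simp)


lemma call_deriv (g : ℝ → ℝ) (hgc : Continuous g) (hgnn : ∀ x, 0 ≤ g x)
    (hgi : Integrable g)
    (Q : Measure ℝ)
    (hQ : Q = volume.withDensity (fun x => ENNReal.ofReal (g x)))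
    (hmom : Integrable (fun x : ℝ => |x|) Q) (K₀ : ℝ) :
    HasDerivAt (fun K => ∫ x, max (x - K) 0 ∂Q) (-(∫ x in Set.Ioi K₀, g x)) K₀ := by
  have hfin : IsFiniteMeasure Q := by
    rw [hQ]
    refine isFiniteMeasure_withDensity ?_
    rw [← ofReal_integral_eq_lintegral_ofReal hgi (ae_of_all _ hgnn)]
    exact ENNReal.ofReal_ne_top
  have hac : Q ≪ volume := by rw [hQ]; exact withDensity_absolutelyContinuous _ _
  set F' : ℝ → ℝ := fun x => if K₀ < x then (-1:ℝ) else 0 with hF'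
  have hF'eq : F' = fun x => -((Set.Ioi K₀).indicator (fun _ => (1:ℝ)) x) := by
    funext x
    by_cases h : K₀ < x <;> simp [hF', h, Set.indicator_apply]
  have key := hasDerivAt_integral_of_dominated_loc_of_lip (F := fun K x => max (x - K) 0)
    (F' := F') (x₀ := K₀) (bound := fun _ => (1:ℝ)) (μ := Q) (s := Metric.ball K₀ 1) (Metric.ball_mem_nhds K₀ one_pos)
    ?_ ?_ ?_ ?_ ?_ ?_
  · obtain ⟨hFint, hderiv⟩ := key
    have : ∫ x, F' x ∂Q = -(∫ x in Set.Ioi K₀, g x) := by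
      rw [hF'eq, integral_neg, integral_indicator measurableSet_Ioi]
      congr 1
      have h1 : ∫ (_ : ℝ) in Set.Ioi K₀, (1:ℝ) ∂Q = (Q (Set.Ioi K₀)).toReal := by
        simp [Measure.restrict_apply_univ, Measure.real]
      have h2 : Q (Set.Ioi K₀) = ENNReal.ofReal (∫ x in Set.Ioi K₀, g x) := by
        rw [hQ, withDensity_apply _ measurableSet_Ioi,
          ← ofReal_integral_eq_lintegral_ofReal hgi.integrableOn
            (ae_of_all _ fun x => hgnn x)]
      rw [h1, h2, ENNReal.toReal_ofReal (integral_nonneg fun x => hgnn x)]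
    rwa [this] at hderiv
  · exact Eventually.of_forall fun K =>
      ((continuous_id.sub continuous_const).max continuous_const).aestronglyMeasurable
  · -- integrability of fun x => max (x - K₀) 0
    refine (hmom.add (integrable_const |K₀|)).mono'
      ((continuous_id.sub continuous_const).max continuous_const).aestronglyMeasurable
      (ae_of_all _ fun x => ?_)
    have h1 : max (x - K₀) 0 ≤ |x| + |K₀| := by
      rcases le_total (x - K₀) 0 with h | h
      · simp [max_eq_right h]; positivity
      · rw [max_eq_left h]
        linarith [le_abs_self x, neg_abs_le K₀]
    rw [Real.norm_eq_abs, abs_of_nonneg (le_max_right _ _)]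
    exact h1
  · rw [hF'eq]
    exact ((measurable_const.indicator measurableSet_Ioi).aestronglyMeasurable (μ := Q)).neg
  · refine ae_of_all _ fun x => ?_
    have h : LipschitzWith 1 (fun K : ℝ => max (x - K) 0) := by
      refine LipschitzWith.of_dist_le_mul fun a b => ?_
      simp only [Real.dist_eq, NNReal.coe_one, one_mul]
      calc |max (x-a) 0 - max (x-b) 0| ≤ |(x-a)-(x-b)| := abs_max_sub_max_le_abs _ _ _
        _ = |a - b| := by rw [show x-a-(x-b) = -(a-b) by ring, abs_neg]
    simpa using h.lipschitzOnWith
  · exact integrable_const 1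
  · -- a.e. differentiability
    have hne : ∀ᵐ x ∂Q, x ≠ K₀ := by
      have : Q {K₀} = 0 := hac (measure_singleton K₀)
      exact (ae_iff (p := fun x => x ≠ K₀)).2 (by simpa using this)
    filter_upwards [hne] with x hx
    rcases lt_or_gt_of_ne hx with h | h
    · -- x < K₀ : locally 0, derivative 0
      have : F' x = 0 := by simp [hF', not_lt.2 h.le, h.not_gt]
      rw [this]
      have hev : (fun K : ℝ => max (x - K) 0) =ᶠ[nhds K₀] fun _ => (0:ℝ) := by
        filter_upwards [eventually_gt_nhds h] with K hK
        simp [max_eq_right (by linarith : x - K ≤ 0)]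
      exact (hasDerivAt_const K₀ (0:ℝ)).congr_of_eventuallyEq hev
    · have : F' x = -1 := by simp [hF', h]
      rw [this]
      have hev : (fun K : ℝ => max (x - K) 0) =ᶠ[nhds K₀] fun K => x - K := by
        filter_upwards [eventually_lt_nhds h] with K hK
        simp [max_eq_left (by linarith : (0:ℝ) ≤ x - K)]
      exact ((hasDerivAt_id K₀).const_sub x).congr_of_eventuallyEq hev

/-- Breeden–Litzenberger formula: if the Borel probability measure `Q` on
`ℝ` has finite first moment and a continuous Lebesgue density `g`, and `B > 0`, then the
call price `C(K) = B · ∫ (x − K)⁺ dQ(x)` is twice differentiable at every `K` with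
`C''(K) = B · g(K)`: the state-price density is the second strike-derivative of the call
price. -/
theorem stmt15
    (g : ℝ → ℝ) (hgc : Continuous g) (hgnn : ∀ x, 0 ≤ g x)
    (hgi : Integrable g) (hg1 : ∫ x, g x = 1)
    (Q : Measure ℝ)
    (hQ : Q = volume.withDensity (fun x => ENNReal.ofReal (g x)))
    (hmom : Integrable (fun x : ℝ => |x|) Q)
    (B : ℝ) (hB : 0 < B)
    (C : ℝ → ℝ) (hC : ∀ K : ℝ, C K = B * ∫ x, max (x - K) 0 ∂Q) :
    (∀ K : ℝ, DifferentiableAt ℝ C K) ∧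
      (∀ K : ℝ, HasDerivAt (deriv C) (B * g K) K) := by
  have hCeq : C = fun K => B * ∫ x, max (x - K) 0 ∂Q := funext hC
  have hD : ∀ K : ℝ, HasDerivAt C (B * (-(∫ x in Set.Ioi K, g x))) K := fun K => by
    rw [hCeq]
    exact (call_deriv g hgc hgnn hgi Q hQ hmom K).const_mul B
  refine ⟨fun K => (hD K).differentiableAt, fun K => ?_⟩
  have hdC : deriv C = fun K => B * (-(∫ x in Set.Ioi K, g x)) :=
    funext fun K => (hD K).deriv
  rw [hdC]
  have := ((tail_deriv g hgc hgi K).neg).const_mul B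
  simpa using this
end

section
/- Default risk detection: let Q be a Borel probability measure on [0, ∞) with finite first moment that is atomless on (0, ∞) but may have an atom at 0, let B > 0, and define C(K) := B · ∫ (x − K)⁺ dQ(x) for K > 0. Then C is differentiable on (0, ∞) with C'(K) = −B · Q((K, ∞)), and lim_{K → 0⁺} C'(K) = −B · (1 − Q({0})); equivalently, the risk-neutral default probability is recovered as B · Q({0}) = B + lim_{K → 0⁺} C'(K). -/
open MeasureTheory Set Filter

lemma aux_deriv
    (Q : Measure ℝ) [IsProbabilityMeasure Q]
    (hatomless : ∀ x : ℝ, 0 < x → Q {x} = 0)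
    (hmom : Integrable (fun x : ℝ => |x|) Q)
    (K : ℝ) (hK : 0 < K) :
    HasDerivAt (fun k => ∫ x, max (x - k) 0 ∂Q) (-(Q (Set.Ioi K)).toReal) K := by
  set F : ℝ → ℝ → ℝ := fun k x => max (x - k) 0 with hF
  set F' : ℝ → ℝ := fun x => if K < x then (-1 : ℝ) else 0 with hF'
  have hmeas' : ∀ k : ℝ, AEStronglyMeasurable (F k) Q := fun k =>
    ((continuous_id.sub continuous_const).max continuous_const).aestronglyMeasurable
  have hmeas : ∀ᶠ k in nhds K, AEStronglyMeasurable (F k) Q := by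
    filter_upwards with k; exact hmeas' k
  have hint : Integrable (F K) Q := by
    refine Integrable.mono' (hmom.add (integrable_const |K|)) (hmeas' K) ?_
    filter_upwards with x
    simp only [F, Real.norm_eq_abs]
    rw [abs_of_nonneg (le_max_right _ _)]
    rcases le_max_iff.2 (Or.inr (le_refl (0:ℝ))) with _
    have : max (x - K) 0 ≤ |x| + |K| := by
      rcases max_cases (x - K) 0 with ⟨h1, _⟩ | ⟨h1, _⟩
      · rw [h1]; have := abs_nonneg K; have := le_abs_self x; have := neg_abs_le K; linarith
      · rw [h1]; positivity
    exact this
  have hF'meas : AEStronglyMeasurable F' Q := by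
    refine (Measurable.ite (measurableSet_Ioi (a := K)) measurable_const
      measurable_const).aestronglyMeasurable
  have hlip : ∀ᵐ x ∂Q, LipschitzOnWith (Real.nnabs ((fun _ : ℝ => (1:ℝ)) x))
      (fun k => F k x) (Metric.ball K 1) := by
    filter_upwards with x
    have h1 : LipschitzWith 1 (fun k : ℝ => x - k) :=
      LipschitzWith.of_dist_le_mul fun a b => by
        rw [Real.dist_eq, Real.dist_eq,
          show x - a - (x - b) = -(a - b) by ring, abs_neg]
        simp
    have h2 : LipschitzWith 1 (fun y : ℝ => max y 0) :=
      LipschitzWith.id.max_const 0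
    have : LipschitzWith (1 * 1) (fun k => F k x) := h2.comp h1
    simp only [mul_one] at this
    have heq : Real.nnabs (1 : ℝ) = 1 := by simp
    rw [heq]
    exact this.lipschitzOnWith
  have hbound : Integrable (fun _ : ℝ => (1:ℝ)) Q := integrable_const 1
  have hdiff : ∀ᵐ x ∂Q, HasDerivAt (fun k => F k x) (F' x) K := by
    have hne : ∀ᵐ x ∂Q, x ≠ K := by
      rw [ae_iff]
      convert hatomless K hK using 2
      ext x; simp
    filter_upwards [hne] with x hx
    rcases lt_or_gt_of_ne hx with hlt | hgt
    · -- x < K : near K the function is 0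
      have : (fun k : ℝ => F k x) =ᶠ[nhds K] fun _ => (0:ℝ) := by
        filter_upwards [Ioi_mem_nhds hlt] with k hk
        simp only [F]
        exact max_eq_right (by simp only [Set.mem_Ioi] at hk; linarith)
      have h0 : HasDerivAt (fun _ : ℝ => (0:ℝ)) 0 K := hasDerivAt_const K 0
      have : HasDerivAt (fun k : ℝ => F k x) 0 K := h0.congr_of_eventuallyEq this
      simpa [F', not_lt.2 hlt.le] using this
    · -- x > K : near K the function is x - k
      have : (fun k : ℝ => F k x) =ᶠ[nhds K] fun k => x - k := by
        filter_upwards [Iio_mem_nhds hgt] with k hk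
        simp only [F]
        exact max_eq_left (by simp only [Set.mem_Iio] at hk; linarith)
      have h0 : HasDerivAt (fun k : ℝ => x - k) (-1) K := by
        simpa using (hasDerivAt_id K).const_sub x
      have : HasDerivAt (fun k : ℝ => F k x) (-1) K := h0.congr_of_eventuallyEq this
      simpa [F', hgt] using this
  have key := (hasDerivAt_integral_of_dominated_loc_of_lip (μ := Q) (F := F) (F' := F')
    (Metric.ball_mem_nhds K one_pos) hmeas hint hF'meas hlip hbound hdiff).2
  have hval : ∫ x, F' x ∂Q = -(Q (Set.Ioi K)).toReal := by
    have : F' = Set.indicator (Set.Ioi K) (fun _ => (-1:ℝ)) := by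
      funext x
      by_cases h : K < x <;> simp [F', Set.indicator, h]
    rw [this, integral_indicator_const _ (measurableSet_Ioi)]
    simp [measureReal_def]
  rw [hval] at key
  exact key

/-- Default risk detection: let `Q` be a Borel probability measure
concentrated on `[0,∞)` with finite first moment, atomless on `(0,∞)` but possibly with
an atom at `0`, and `B > 0`.  The call price `C(K) = B · ∫ (x − K)⁺ dQ(x)` is
differentiable on `(0,∞)` with `C'(K) = −B · Q((K,∞))`, and
`lim_{K→0⁺} C'(K) = −B·(1 − Q({0}))`; equivalently the risk-neutral default probability
is recovered as `B · Q({0}) = B + lim_{K→0⁺} C'(K)`. -/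
theorem stmt16
    (Q : Measure ℝ) [IsProbabilityMeasure Q]
    (hsupp : Q (Set.Iio 0) = 0)
    (hatomless : ∀ x : ℝ, 0 < x → Q {x} = 0)
    (hmom : Integrable (fun x : ℝ => |x|) Q)
    (B : ℝ) (hB : 0 < B)
    (C : ℝ → ℝ) (hC : ∀ K : ℝ, 0 < K → C K = B * ∫ x, max (x - K) 0 ∂Q) :
    (∀ K : ℝ, 0 < K → HasDerivAt C (-(B * (Q (Set.Ioi K)).toReal)) K) ∧
      Tendsto (deriv C) (nhdsWithin 0 (Set.Ioi 0))
        (nhds (-(B * (1 - (Q {0}).toReal)))) ∧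
      Tendsto (fun K => B + deriv C K) (nhdsWithin 0 (Set.Ioi 0))
        (nhds (B * (Q {0}).toReal)) := by
  -- part 1
  have h1 : ∀ K : ℝ, 0 < K → HasDerivAt C (-(B * (Q (Set.Ioi K)).toReal)) K := by
    intro K hK
    have hd := (aux_deriv Q hatomless hmom K hK).const_mul B
    have heq : C =ᶠ[nhds K] fun k => B * ∫ x, max (x - k) 0 ∂Q := by
      filter_upwards [Ioi_mem_nhds hK] with k hk
      exact hC k hk
    have : HasDerivAt C (B * -(Q (Set.Ioi K)).toReal) K := hd.congr_of_eventuallyEq heq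
    convert this using 1; ring
  -- mass identity : Q (Ioi 0) = 1 - Q {0}  in toReal
  have hfin : ∀ s : Set ℝ, Q s ≠ ⊤ := fun s => (measure_lt_top Q s).ne
  have hmass : (Q (Set.Ioi 0)).toReal = 1 - (Q {0}).toReal := by
    have hsplit : Q {0} + Q (Set.Ioi 0) = 1 := by
      have hunion : ({0} : Set ℝ) ∪ Set.Ioi 0 = Set.Ici 0 := by
        ext x; simp [le_iff_lt_or_eq, eq_comm, or_comm]
      have hdisj : Disjoint ({0} : Set ℝ) (Set.Ioi 0) := by
        simp [Set.disjoint_left]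
      have := measure_union (μ := Q) hdisj measurableSet_Ioi
      rw [hunion] at this
      rw [← this]
      have : Q (Set.Ici 0) = 1 := by
        have hcompl : (Set.Ici (0:ℝ))ᶜ = Set.Iio 0 := by ext x; simp
        rw [← measure_univ (μ := Q), ← Set.union_compl_self (Set.Ici (0:ℝ)),
          measure_union disjoint_compl_right (measurableSet_Ici.compl), hcompl, hsupp, add_zero]
      rw [this]
    have h0 : (Q {0}).toReal + (Q (Set.Ioi 0)).toReal = 1 := by
      rw [← ENNReal.toReal_add (hfin _) (hfin _), hsplit, ENNReal.toReal_one]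
    linarith
  -- continuity of K ↦ Q(Ioi K) at 0⁺
  have hcont : Tendsto (fun K : ℝ => (Q (Set.Ioi K)).toReal) (nhdsWithin 0 (Set.Ioi 0))
      (nhds (Q (Set.Ioi 0)).toReal) := by
    have hmono : Monotone (fun n : ℕ => Set.Ioi ((1:ℝ)/(n+1))) := by
      intro m n hmn
      apply Set.Ioi_subset_Ioi
      apply one_div_le_one_div_of_le (by positivity)
      have : (m:ℝ) ≤ n := Nat.cast_le.2 hmn
      linarith
    have hU : (⋃ n : ℕ, Set.Ioi ((1:ℝ)/(n+1))) = Set.Ioi 0 := by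
      ext x
      simp only [Set.mem_iUnion, Set.mem_Ioi]
      constructor
      · rintro ⟨n, hn⟩; exact lt_trans (by positivity) hn
      · intro hx
        obtain ⟨n, hn⟩ := exists_nat_one_div_lt hx
        exact ⟨n, hn⟩
    have hseq : Tendsto (fun n : ℕ => (Q (Set.Ioi ((1:ℝ)/(n+1)))).toReal) atTop
        (nhds (Q (Set.Ioi 0)).toReal) := by
      have := tendsto_measure_iUnion_atTop (μ := Q) hmono
      rw [hU] at this
      exact (ENNReal.tendsto_toReal (hfin _)).comp this
    rw [Metric.tendsto_nhdsWithin_nhds]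
    intro ε hε
    rw [Metric.tendsto_atTop] at hseq
    obtain ⟨N, hN⟩ := hseq ε hε
    refine ⟨(1:ℝ)/(N+1), by positivity, ?_⟩
    intro K hK hdist
    simp only [Real.dist_eq, sub_zero] at hdist
    rw [abs_of_pos hK] at hdist
    have hKpos : (0:ℝ) < K := hK
    have hle1 : (Q (Set.Ioi K)).toReal ≤ (Q (Set.Ioi 0)).toReal :=
      ENNReal.toReal_mono (hfin _) (measure_mono (Set.Ioi_subset_Ioi hKpos.le))
    have hle2 : (Q (Set.Ioi ((1:ℝ)/(N+1)))).toReal ≤ (Q (Set.Ioi K)).toReal :=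
      ENNReal.toReal_mono (hfin _) (measure_mono (Set.Ioi_subset_Ioi hdist.le))
    have hN' := hN N le_rfl
    rw [Real.dist_eq] at hN' ⊢
    rw [abs_lt] at hN' ⊢
    constructor <;> [linarith [hN'.1]; linarith [hN'.2]]
  -- deriv C agrees with the formula on (0, ∞)
  have hderiv_eq : deriv C =ᶠ[nhdsWithin (0:ℝ) (Set.Ioi 0)]
      fun K => -(B * (Q (Set.Ioi K)).toReal) := by
    filter_upwards [self_mem_nhdsWithin] with K hK
    exact (h1 K hK).deriv
  have h2 : Tendsto (deriv C) (nhdsWithin 0 (Set.Ioi 0))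
      (nhds (-(B * (1 - (Q {0}).toReal)))) := by
    have : Tendsto (fun K : ℝ => -(B * (Q (Set.Ioi K)).toReal)) (nhdsWithin 0 (Set.Ioi 0))
        (nhds (-(B * (Q (Set.Ioi 0)).toReal))) :=
      ((hcont.const_mul B).neg)
    rw [hmass] at this
    exact Tendsto.congr' hderiv_eq.symm this
  refine ⟨h1, h2, ?_⟩
  have h3 := h2.const_add B
  convert h3 using 2
  ring
end
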